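/- arXiv:2006.13340 — 5 statements merged into one kernel-verified Lean document; each statement's English description precedes it below -/
import Mathlib

section
/- Let D be a function on pairs of probability vectors (of arbitrary finite dimension) satisfying the data processing inequality (monotonicity under column-stochastic matrices applied to both arguments), additivity under tensor (Kronecker) products, and the normalization D((1,0) || (1/2,1/2)) = 1. Then for any probability vector p = (p_1,...,p_n) with p_x > 0, D(e_x || p) = -log_2(p_x), where e_x is the x-th standard basis probability vector. -/
open scoped BigOperators

/-- A probability vector on a finite index type. -/
def IsProbVec {ι : Type} [Fintype ι] (p : ι → ℝ) : Prop :=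
  (∀ i, 0 ≤ p i) ∧ ∑ i, p i = 1

/-- A column-stochastic matrix. -/
def IsStochastic {α β : Type} [Fintype α] [Fintype β] (E : Matrix α β ℝ) : Prop :=
  (∀ i j, 0 ≤ E i j) ∧ ∀ j, ∑ i, E i j = 1

/-- Kronecker (tensor) product of two probability vectors. -/
def kron {m n : ℕ} (p : Fin m → ℝ) (q : Fin n → ℝ) : Fin (m * n) → ℝ :=
  fun i => p (finProdFinEquiv.symm i).1 * q (finProdFinEquiv.symm i).2

lemma probVec_pair {q : ℝ} (h0 : 0 ≤ q) (h1 : q ≤ 1) : IsProbVec ![q, 1-q] := by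
  constructor
  · intro i; fin_cases i <;> simp <;> linarith
  · simp [Fin.sum_univ_two]

lemma probVec_single {n : ℕ} (x : Fin n) : IsProbVec (fun i => if i = x then (1:ℝ) else 0) := by
  constructor
  · intro i; simp only []; positivity
  · simp

lemma probVec_le_one {n : ℕ} {p : Fin n → ℝ} (hp : IsProbVec p) (x : Fin n) : p x ≤ 1 :=
  hp.2 ▸ Finset.single_le_sum (fun i _ => hp.1 i) (Finset.mem_univ x)

lemma probVec_eq_zero {n : ℕ} {p : Fin n → ℝ} (hp : IsProbVec p) {x : Fin n} (hx : p x = 1)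
    {i : Fin n} (hi : i ≠ x) : p i = 0 := by
  have h1 : ∑ j ∈ Finset.univ.erase x, p j = 0 := by
    have := Finset.add_sum_erase Finset.univ p (Finset.mem_univ x)
    rw [hp.2] at this; linarith [hx ▸ this]
  have := (Finset.sum_eq_zero_iff_of_nonneg (fun j _ => hp.1 j)).mp h1 i
    (Finset.mem_erase.mpr ⟨hi, Finset.mem_univ i⟩)
  exact this

lemma probVec_kron {m n : ℕ} {p : Fin m → ℝ} {q : Fin n → ℝ} (hp : IsProbVec p)
    (hq : IsProbVec q) : IsProbVec (kron p q) := by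
  constructor
  · intro i; exact mul_nonneg (hp.1 _) (hq.1 _)
  · have := Equiv.sum_comp (finProdFinEquiv.symm : Fin (m*n) ≃ Fin m × Fin n)
      (fun z => p z.1 * q z.2)
    rw [show (∑ i, kron p q i) = ∑ i, p (finProdFinEquiv.symm i).1 * q (finProdFinEquiv.symm i).2 from rfl,
      this, Fintype.sum_prod_type, ← Finset.sum_mul_sum, hp.2, hq.2, one_mul]

lemma sum_ite_self {n : ℕ} (x : Fin n) (p : Fin n → ℝ) :
    ∑ j, (if j = x then p j else 0) = p x := by
  rw [Finset.sum_ite_eq' Finset.univ x p, if_pos (Finset.mem_univ x)]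

lemma sum_ite_compl {n : ℕ} (x : Fin n) (p : Fin n → ℝ) :
    ∑ j, (if j = x then 0 else p j) = (∑ j, p j) - p x := by
  have : ∀ j, (if j = x then p j else 0) + (if j = x then 0 else p j) = p j := by
    intro j; split <;> simp
  have h2 : ∑ j, ((if j = x then p j else 0) + (if j = x then 0 else p j)) = ∑ j, p j :=
    Finset.sum_congr rfl (fun j _ => this j)
  rw [Finset.sum_add_distrib, sum_ite_self] at h2
  linarith

lemma keyL (D : ∀ n : ℕ, (Fin n → ℝ) → (Fin n → ℝ) → EReal)
    (hDPI : ∀ (n m : ℕ) (p q : Fin n → ℝ) (E : Matrix (Fin m) (Fin n) ℝ),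
      IsProbVec p → IsProbVec q → IsStochastic E →
      D m (E.mulVec p) (E.mulVec q) ≤ D n p q)
    {n : ℕ} (p : Fin n → ℝ) (x : Fin n) (hp : IsProbVec p) (hx : 0 < p x) :
    D n (fun i => if i = x then 1 else 0) p = D 2 ![1,0] ![p x, 1 - p x] := by
  have hx1 : p x ≤ 1 := probVec_le_one hp x
  have hre : (![1, 0] : Fin 2 → ℝ) = ![1, 1-1] := by norm_num
  have hprob1 : IsProbVec (![1, 0] : Fin 2 → ℝ) := hre ▸ probVec_pair (by norm_num) le_rfl
  have hprob2 : IsProbVec ![p x, 1 - p x] := probVec_pair hx.le hx1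
  -- collapse matrix
  set C : Matrix (Fin 2) (Fin n) ℝ := Matrix.of fun i j =>
    if j = x then (![1,0] : Fin 2 → ℝ) i else (![0,1] : Fin 2 → ℝ) i with hC
  have hCs : IsStochastic C := by
    constructor
    · intro i j; simp only [hC, Matrix.of_apply]; split <;> (fin_cases i <;> norm_num)
    · intro j; simp only [hC, Matrix.of_apply]
      split <;> simp [Fin.sum_univ_two]
  have hCe : C.mulVec (fun i => if i = x then 1 else 0) = ![1, 0] := by
    funext i
    rw [Matrix.mulVec, dotProduct]
    have : ∀ j, C i j * (if j = x then (1:ℝ) else 0) = if j = x then C i x else 0 := by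
      intro j; split
      · rename_i h; rw [h]; ring
      · ring
    rw [Finset.sum_congr rfl (fun j _ => this j), Finset.sum_ite_eq' Finset.univ x (fun _ => C i x)]
    simp [hC]
  have hCp : C.mulVec p = ![p x, 1 - p x] := by
    have c0 : (C.mulVec p) 0 = p x := by
      rw [Matrix.mulVec, dotProduct]
      have : ∀ j, C 0 j * p j = if j = x then p j else 0 := by
        intro j; simp only [hC, Matrix.of_apply]; split <;> simp
      rw [Finset.sum_congr rfl (fun j _ => this j), sum_ite_self]
    have c1 : (C.mulVec p) 1 = 1 - p x := by
      rw [Matrix.mulVec, dotProduct]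
      have : ∀ j, C 1 j * p j = if j = x then 0 else p j := by
        intro j; simp only [hC, Matrix.of_apply]; split <;> simp
      rw [Finset.sum_congr rfl (fun j _ => this j), sum_ite_compl, hp.2]
    funext i
    fin_cases i
    · simpa using c0
    · simpa using c1
  -- expand matrix
  set Ex : Matrix (Fin n) (Fin 2) ℝ := Matrix.of fun i j =>
    if j = 0 then (if i = x then 1 else 0)
    else (if i = x then (if p x = 1 then 1 else 0) else p i / (1 - p x)) with hE
  have hEs : IsStochastic Ex := by
    constructor
    · intro i j; simp only [hE, Matrix.of_apply]
      split
      · split <;> norm_num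
      · split
        · split <;> norm_num
        · exact div_nonneg (hp.1 i) (by linarith)
    · intro j; simp only [hE, Matrix.of_apply]
      by_cases hj : j = 0
      · simp [hj]
      · simp only [hj, if_false]
        by_cases h1 : p x = 1
        · have : ∀ i, (if i = x then (if p x = 1 then (1:ℝ) else 0) else p i / (1 - p x)) =
              if i = x then 1 else 0 := by
            intro i; split
            · rfl
            · rename_i h; rw [probVec_eq_zero hp h1 h, zero_div]
          rw [Finset.sum_congr rfl (fun i _ => this i)]; simp
        · have h1' : 1 - p x ≠ 0 := fun h => h1 (by linarith)
          have : ∀ i, (if i = x then (if p x = 1 then (1:ℝ) else 0) else p i / (1 - p x)) =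
              (if i = x then 0 else p i) / (1 - p x) := by
            intro i; split
            · rw [zero_div]
            · rfl
          rw [Finset.sum_congr rfl (fun i _ => this i), ← Finset.sum_div, sum_ite_compl, hp.2,
            div_self h1']
  have hEe : Ex.mulVec ![1, 0] = (fun i => if i = x then 1 else 0) := by
    funext i
    rw [Matrix.mulVec, dotProduct, Fin.sum_univ_two]
    simp [hE]
  have hEp : Ex.mulVec ![p x, 1 - p x] = p := by
    funext i
    rw [Matrix.mulVec, dotProduct, Fin.sum_univ_two]
    simp only [hE, Matrix.of_apply]
    by_cases hix : i = x
    · subst hix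
      simp only [if_pos rfl]
      by_cases h1 : p i = 1 <;> simp [h1]
    · simp only [hix, if_false]
      by_cases h1 : p x = 1
      · rw [probVec_eq_zero hp h1 hix]; simp [h1]
      · have h1' : 1 - p x ≠ 0 := fun h => h1 (by linarith)
        simp only [Matrix.cons_val_zero, Matrix.cons_val_one, Matrix.head_cons]
        simp only [if_true, show (1:Fin 2) ≠ 0 from by decide, if_false]
        field_simp
        ring
  refine le_antisymm ?_ ?_
  · have := hDPI 2 n ![1,0] ![p x, 1 - p x] Ex hprob1 hprob2 hEs
    rwa [hEe, hEp] at this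
  · have := hDPI n 2 (fun i => if i = x then 1 else 0) p C (probVec_single x) hp hCs
    rwa [hCe, hCp] at this

lemma keyMono (D : ∀ n : ℕ, (Fin n → ℝ) → (Fin n → ℝ) → EReal)
    (hDPI : ∀ (n m : ℕ) (p q : Fin n → ℝ) (E : Matrix (Fin m) (Fin n) ℝ),
      IsProbVec p → IsProbVec q → IsStochastic E →
      D m (E.mulVec p) (E.mulVec q) ≤ D n p q)
    {a b : ℝ} (ha : 0 < a) (hab : a ≤ b) (hb1 : b ≤ 1) :
    D 2 ![1,0] ![b,1-b] ≤ D 2 ![1,0] ![a,1-a] := by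
  by_cases ha1 : a = 1
  · have hb : b = 1 := le_antisymm hb1 (ha1 ▸ hab)
    rw [ha1, hb]
  · have ha1' : a < 1 := lt_of_le_of_ne (le_trans hab hb1) ha1
    have hd : (0:ℝ) < 1 - a := by linarith
    set c : ℝ := (b - a) / (1 - a) with hc
    have hc0 : 0 ≤ c := div_nonneg (by linarith) hd.le
    have hc1 : c ≤ 1 := (div_le_one hd).mpr (by linarith)
    set M : Matrix (Fin 2) (Fin 2) ℝ := Matrix.of ![![1, c], ![0, 1-c]] with hM
    have hMs : IsStochastic M := by
      constructor
      · intro i j; fin_cases i <;> fin_cases j <;> simp [hM] <;> linarith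
      · intro j; fin_cases j <;> simp [hM, Fin.sum_univ_two]
    have h1 : M.mulVec ![1,0] = ![1,0] := by
      funext i
      rw [Matrix.mulVec, dotProduct, Fin.sum_univ_two]
      fin_cases i <;> simp [hM]
    have h2 : M.mulVec ![a,1-a] = ![b,1-b] := by
      have hca : c * (1 - a) = b - a := div_mul_cancel₀ _ hd.ne'
      funext i
      rw [Matrix.mulVec, dotProduct, Fin.sum_univ_two]
      fin_cases i <;> simp [hM] <;> nlinarith [hca]
    have hre : (![1, 0] : Fin 2 → ℝ) = ![1, 1-1] := by norm_num
    have hprob1 : IsProbVec (![1, 0] : Fin 2 → ℝ) := hre ▸ probVec_pair (by norm_num) le_rfl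
    have := hDPI 2 2 ![1,0] ![a,1-a] M hprob1 (probVec_pair ha.le (le_trans hab hb1)) hMs
    rwa [h1, h2] at this

lemma kron_e0 : kron ![(1:ℝ),0] ![1,0] = fun i => if i = (0 : Fin (2*2)) then 1 else 0 := by
  have s0 : (finProdFinEquiv.symm (0 : Fin (2*2))) = (0,0) := by decide
  have s1 : (finProdFinEquiv.symm (1 : Fin (2*2))) = (0,1) := by decide
  have s2 : (finProdFinEquiv.symm (2 : Fin (2*2))) = (1,0) := by decide
  have s3 : (finProdFinEquiv.symm (3 : Fin (2*2))) = (1,1) := by decide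
  funext i
  fin_cases i <;> simp [kron, s0, s1, s2, s3]

lemma kron_val0 (a b : ℝ) : kron ![a,1-a] ![b,1-b] (0 : Fin (2*2)) = a*b := by
  have s0 : (finProdFinEquiv.symm (0 : Fin (2*2))) = (0,0) := by decide
  simp [kron, s0]


/-- If `D` is a classical relative entropy (data processing under column-stochastic
matrices, additivity under Kronecker products, and normalization), then
`D(e_x ‖ p) = -log₂ (p x)` for any probability vector `p` with `p x > 0`. -/
theorem stmt0
    (D : ∀ n : ℕ, (Fin n → ℝ) → (Fin n → ℝ) → EReal)
    (hDPI : ∀ (n m : ℕ) (p q : Fin n → ℝ) (E : Matrix (Fin m) (Fin n) ℝ),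
      IsProbVec p → IsProbVec q → IsStochastic E →
      D m (E.mulVec p) (E.mulVec q) ≤ D n p q)
    (hAdd : ∀ (n m : ℕ) (p q : Fin n → ℝ) (p' q' : Fin m → ℝ),
      IsProbVec p → IsProbVec q → IsProbVec p' → IsProbVec q' →
      D (n * m) (kron p p') (kron q q') = D n p q + D m p' q')
    (hNorm : D 2 ![1, 0] ![1/2, 1/2] = 1) :
    ∀ (n : ℕ) (p : Fin n → ℝ) (x : Fin n), IsProbVec p → 0 < p x →
      D n (fun i => if i = x then 1 else 0) p = ((-Real.logb 2 (p x) : ℝ) : EReal) := by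
  have hre : (![1, 0] : Fin 2 → ℝ) = ![1, 1-1] := by norm_num
  have hprob1 : IsProbVec (![1, 0] : Fin 2 → ℝ) := hre ▸ probVec_pair (by norm_num) le_rfl
  set f : ℝ → EReal := fun q => D 2 ![1,0] ![q, 1-q] with hf
  -- normalization
  have h_half : f (1/2) = 1 := by
    have : (![(1:ℝ)/2, 1-1/2] : Fin 2 → ℝ) = ![1/2, 1/2] := by norm_num
    rw [hf]; simp only; rw [this]; exact hNorm
  -- multiplicativity
  have hMul : ∀ a b : ℝ, 0 < a → a ≤ 1 → 0 < b → b ≤ 1 → f (a*b) = f a + f b := by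
    intro a b ha ha1 hb hb1
    have hpa := probVec_pair ha.le ha1
    have hpb := probVec_pair hb.le hb1
    have hk := hAdd 2 2 ![1,0] ![a,1-a] ![1,0] ![b,1-b] hprob1 hpa hprob1 hpb
    rw [kron_e0] at hk
    have hkp : IsProbVec (kron ![a,1-a] ![b,1-b]) := probVec_kron hpa hpb
    have hv : kron ![a,1-a] ![b,1-b] (0 : Fin (2*2)) = a*b := kron_val0 a b
    have hkey := keyL D hDPI (kron ![a,1-a] ![b,1-b]) (0 : Fin (2*2)) hkp
      (hv ▸ mul_pos ha hb)
    rw [hv] at hkey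
    exact hkey.symm.trans hk
  -- f 1 = 0
  have hf1 : f 1 = 0 := by
    have hdbl : f 1 = f 1 + f 1 := by
      have := hMul 1 1 one_pos le_rfl one_pos le_rfl
      rwa [mul_one] at this
    have hle : f 1 ≤ 1 := by
      have := keyMono D hDPI (a := 1/2) (b := 1) (by norm_num) (by norm_num) le_rfl
      calc f 1 ≤ f (1/2) := this
        _ = 1 := h_half
    have hbot : f 1 ≠ ⊥ := by
      intro hb
      have := hMul (1/2) 1 (by norm_num) (by norm_num) one_pos le_rfl
      rw [mul_one, h_half, hb, EReal.add_bot] at this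
      exact (by rw [← EReal.coe_one] at this; exact EReal.coe_ne_bot 1 this)
    generalize hg : f 1 = r at hdbl hle hbot
    induction r with
    | bot => simp at hbot
    | coe r =>
      have : r + r = r := by exact_mod_cast hdbl.symm
      norm_cast; linarith
    | top => exact absurd hle (not_le.mpr (by rw [← EReal.coe_one]; exact EReal.coe_lt_top 1))
  -- f ((1/2)^k) = k
  have hHalfPow : ∀ k : ℕ, f ((1/2)^k) = ((k : ℝ) : EReal) := by
    intro k
    induction k with
    | zero => simpa using hf1
    | succ k ih =>
      have hpos : (0:ℝ) < (1/2)^k := by positivity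
      have hle1 : ((1:ℝ)/2)^k ≤ 1 := pow_le_one₀ (by norm_num) (by norm_num)
      rw [pow_succ, hMul _ _ hpos hle1 (by norm_num) (by norm_num), ih, h_half]
      rw [show ((1:EReal)) = ((1:ℝ):EReal) by norm_cast, ← EReal.coe_add]
      norm_cast
  -- existence of real value
  have hfin : ∀ q : ℝ, 0 < q → q ≤ 1 → ∃ r : ℝ, f q = (r : EReal) ∧ 0 ≤ r := by
    intro q hq hq1
    obtain ⟨k, hk⟩ := exists_pow_lt_of_lt_one hq (show (1:ℝ)/2 < 1 by norm_num)
    have hub : f q ≤ ((k:ℝ) : EReal) := by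
      rw [← hHalfPow k]
      exact keyMono D hDPI (by positivity) hk.le hq1
    have hlb : (0 : EReal) ≤ f q := by
      rw [← hf1]
      exact keyMono D hDPI hq hq1 le_rfl
    generalize hg : f q = r at hub hlb
    induction r with
    | bot => exact absurd hlb (by simp)
    | coe r => exact ⟨r, rfl, by exact_mod_cast hlb⟩
    | top => exact absurd hub (not_le.mpr (EReal.coe_lt_top _))
  -- powers
  have hPow : ∀ q : ℝ, 0 < q → q ≤ 1 → ∀ r : ℝ, f q = (r : EReal) →
      ∀ m : ℕ, f (q^m) = (((m : ℝ) * r : ℝ) : EReal) := by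
    intro q hq hq1 r hr m
    induction m with
    | zero => simpa using hf1
    | succ m ih =>
      have hpos : (0:ℝ) < q^m := by positivity
      have hle1 : q^m ≤ 1 := pow_le_one₀ hq.le hq1
      rw [pow_succ, hMul _ _ hpos hle1 hq hq1, ih, hr, ← EReal.coe_add]
      norm_cast
      push_cast
      ring
  -- main
  intro n p x hp hx
  have hq1 : p x ≤ 1 := probVec_le_one hp x
  set q : ℝ := p x with hqdef
  obtain ⟨r, hr, hr0⟩ := hfin q hx hq1
  set t : ℝ := -Real.logb 2 q with ht
  have ht0 : 0 ≤ t := by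
    rw [ht]
    simp only [neg_nonneg]
    exact Real.logb_nonpos (by norm_num) hx.le hq1
  have hq2 : q = (2:ℝ) ^ (-t) := by
    rw [ht, neg_neg]
    exact (Real.rpow_logb two_pos (by norm_num) hx).symm
  have hhalf_rpow : ∀ k : ℕ, ((1:ℝ)/2)^k = (2:ℝ) ^ (-(k:ℝ)) := by
    intro k
    rw [Real.rpow_neg (by norm_num), Real.rpow_natCast, one_div, inv_pow]
  have hq_rpow : ∀ m : ℕ, q^m = (2:ℝ) ^ (-(t * m)) := by
    intro m
    rw [hq2, ← Real.rpow_natCast ((2:ℝ)^(-t)) m, ← Real.rpow_mul (by norm_num)]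
    ring_nf
  -- comparisons
  have claim1 : ∀ m k : ℕ, q^m ≤ (1/2)^k → (k:ℝ) ≤ (m : ℝ) * r := by
    intro m k hcomp
    have h1 : f ((1/2)^k) ≤ f (q^m) :=
      keyMono D hDPI (by positivity) hcomp (pow_le_one₀ (by norm_num) (by norm_num))
    rw [hHalfPow k, hPow q hx hq1 r hr m] at h1
    exact_mod_cast h1
  have claim2 : ∀ m k : ℕ, (1/2:ℝ)^k ≤ q^m → (m : ℝ) * r ≤ (k:ℝ) := by
    intro m k hcomp
    have h1 : f (q^m) ≤ f ((1/2)^k) :=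
      keyMono D hDPI (by positivity) hcomp (pow_le_one₀ hx.le hq1)
    rw [hHalfPow k, hPow q hx hq1 r hr m] at h1
    exact_mod_cast h1
  have hsq : ∀ m : ℕ, (m:ℝ) * |r - t| ≤ 1 := by
    intro m
    have hmt0 : 0 ≤ t * m := by positivity
    -- upper: k1 = ceil (t m)
    have hup : (m:ℝ) * r ≤ t * m + 1 := by
      set k1 : ℕ := ⌈t * m⌉₊ with hk1
      have hle : t * m ≤ (k1 : ℝ) := Nat.le_ceil _
      have hcomp : (1/2:ℝ)^k1 ≤ q^m := by
        rw [hhalf_rpow, hq_rpow]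
        exact Real.rpow_le_rpow_of_exponent_le (by norm_num) (by linarith)
      have := claim2 m k1 hcomp
      have hceil : (k1 : ℝ) < t * m + 1 := Nat.ceil_lt_add_one hmt0
      linarith
    have hdown : t * m - 1 ≤ (m:ℝ) * r := by
      set k2 : ℕ := ⌊t * m⌋₊ with hk2
      have hle : (k2 : ℝ) ≤ t * m := Nat.floor_le hmt0
      have hcomp : q^m ≤ (1/2:ℝ)^k2 := by
        rw [hhalf_rpow, hq_rpow]
        exact Real.rpow_le_rpow_of_exponent_le (by norm_num) (by linarith)
      have := claim1 m k2 hcomp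
      have hfl : t * m < (k2 : ℝ) + 1 := Nat.lt_floor_add_one _
      linarith
    rcases abs_cases (r - t) with ⟨heq, _⟩ | ⟨heq, _⟩ <;> rw [heq] <;> nlinarith
  have hrt : r = t := by
    by_contra hne
    have habs : 0 < |r - t| := abs_pos.mpr (sub_ne_zero.mpr hne)
    obtain ⟨m, hm⟩ := exists_nat_gt (1 / |r - t|)
    have := hsq m
    have h2 : 1 / |r - t| * |r - t| < (m:ℝ) * |r - t| := by
      exact mul_lt_mul_of_pos_right hm habs
    rw [one_div_mul_cancel habs.ne'] at h2
    linarith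
  rw [keyL D hDPI p x hp hx, ← hqdef]
  show f q = _
  rw [hr, hrt, ht]
end

section
/- Let p, q be probability vectors in R^n with all components of q positive and rational, say q_x = n_x/n with n_x ∈ N and Σ_x n_x = n. Let r ∈ R^n' be the probability vector obtained by concatenating, for each x, the block consisting of n_x copies of p_x/n_x, and let u be the uniform distribution on n outcomes. Then (p,q) and (r,u) are equivalent under relative majorization: there exist column-stochastic matrices E and F with (Ep, Eq) = (r, u) and (Fr, Fu) = (p, q). -/
open scoped BigOperators

/-- If `q` has positive rational components `q x = m x / N` with `N = ∑ m x`,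
then `(p, q)` is equivalent under relative majorization to `(r, u)` where `r`
consists of the blocks of `m x` copies of `p x / m x`, and `u` is the uniform
distribution on `N` outcomes. -/
theorem stmt4
    (n : ℕ) (p q : Fin n → ℝ) (hp : IsProbVec p) (hq : IsProbVec q)
    (m : Fin n → ℕ) (hm : ∀ x, 0 < m x) (N : ℕ) (hN : N = ∑ x, m x)
    (hqm : ∀ x, q x = (m x : ℝ) / (N : ℝ))
    (r : (Σ x : Fin n, Fin (m x)) → ℝ) (hr : ∀ i, r i = p i.1 / (m i.1 : ℝ))
    (u : (Σ x : Fin n, Fin (m x)) → ℝ) (hu : ∀ i, u i = 1 / (N : ℝ)) :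
    (∃ E : Matrix (Σ x : Fin n, Fin (m x)) (Fin n) ℝ,
        IsStochastic E ∧ E.mulVec p = r ∧ E.mulVec q = u) ∧
    (∃ F : Matrix (Fin n) (Σ x : Fin n, Fin (m x)) ℝ,
        IsStochastic F ∧ F.mulVec r = p ∧ F.mulVec u = q) := by
  have hmne : ∀ x : Fin n, ((m x : ℝ)) ≠ 0 := fun x => by
    exact_mod_cast (hm x).ne'
  constructor
  · refine ⟨fun i j => if j = i.1 then ((m i.1 : ℝ))⁻¹ else 0, ⟨?_, ?_⟩, ?_, ?_⟩
    · intro i j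
      dsimp only
      split
      · positivity
      · exact le_rfl
    · intro j
      dsimp only
      rw [← Finset.univ_sigma_univ, Finset.sum_sigma]
      have : ∀ x : Fin n, ∑ _k : Fin (m x), (if j = x then ((m x : ℝ))⁻¹ else 0)
          = if j = x then 1 else 0 := by
        intro x
        rw [Finset.sum_const, Finset.card_univ, Fintype.card_fin]
        split
        · rw [nsmul_eq_mul, mul_inv_cancel₀ (hmne x)]
        · simp
      simp only [this, Finset.sum_ite_eq, Finset.mem_univ, if_pos]
    · funext i
      simp [Matrix.mulVec, dotProduct, ite_mul, Finset.sum_ite_eq, Finset.sum_ite_eq',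
        hr i, div_eq_inv_mul]
    · funext i
      simp [Matrix.mulVec, dotProduct, ite_mul, Finset.sum_ite_eq, Finset.sum_ite_eq',
        hu i, hqm i.1]
      rw [div_eq_mul_inv, ← mul_assoc, inv_mul_cancel₀ (hmne i.1), one_mul]
  · refine ⟨fun j i => if i.1 = j then 1 else 0, ⟨?_, ?_⟩, ?_, ?_⟩
    · intro j i
      dsimp only
      split <;> norm_num
    · intro i
      simp [Finset.sum_ite_eq]
    · funext j
      simp only [Matrix.mulVec, dotProduct, ite_mul, one_mul, zero_mul]
      rw [← Finset.univ_sigma_univ, Finset.sum_sigma]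
      have : ∀ x : Fin n, ∑ k : Fin (m x), (if (⟨x, k⟩ : Σ x, Fin (m x)).1 = j then r ⟨x, k⟩ else 0)
          = if x = j then p x else 0 := by
        intro x
        split_ifs with h
        · subst h
          simp [hr, Finset.sum_const, Finset.card_univ, nsmul_eq_mul, hmne x,
            div_eq_inv_mul, ← mul_assoc, mul_inv_cancel₀ (hmne x)]
        · simp [h]
      simp only [this, Finset.sum_ite_eq', Finset.mem_univ, if_pos]
    · funext j
      simp only [Matrix.mulVec, dotProduct, ite_mul, one_mul, zero_mul]
      rw [← Finset.univ_sigma_univ, Finset.sum_sigma]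
      have : ∀ x : Fin n, ∑ k : Fin (m x), (if (⟨x, k⟩ : Σ x, Fin (m x)).1 = j then u ⟨x, k⟩ else 0)
          = if x = j then (m x : ℝ) / N else 0 := by
        intro x
        split_ifs with h
        · subst h
          simp [hu, Finset.sum_const, Finset.card_univ, nsmul_eq_mul, div_eq_inv_mul, mul_comm]
        · simp [h]
      simp only [this, Finset.sum_ite_eq', Finset.mem_univ, if_pos, hqm j]
end

section
/- Blackwell's theorem: For probability vectors p, q ∈ R^n and p', q' ∈ R^m, there exists a column-stochastic matrix E with Ep = p' and Eq = q' if and only if the testing region T(p',q') is contained in T(p,q), where T(p,q) := {(p·t, q·t) ∈ R^2 : t ∈ R^n, 0 ≤ t_i ≤ 1 for all i}. -/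
open scoped BigOperators

/-- The testing region of a pair of probability vectors. -/
def testingRegion {n : ℕ} (p q : Fin n → ℝ) : Set (ℝ × ℝ) :=
  {y | ∃ t : Fin n → ℝ, (∀ i, 0 ≤ t i ∧ t i ≤ 1) ∧
    y = (∑ i, p i * t i, ∑ i, q i * t i)}

open Finset

/-- hinge increment bound -/
lemma hinge_incr {u s1 s2 : ℝ} (h : s1 ≤ s2) :
    max (s2 - u) 0 - max (s1 - u) 0 ≤ s2 - s1 := by
  rcases le_total (s1 - u) 0 with h1 | h1 <;> rcases le_total (s2 - u) 0 with h2 | h2 <;>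
    simp [max_eq_left, max_eq_right, *] <;> linarith

lemma rep_lemma (S : Finset (ℝ × ℝ)) :
    ∀ (hS : S.Nonempty) (d : ℝ), (∀ p ∈ S, p.2 ≤ d) →
    ∃ (γ δ : ℝ) (K : ℕ) (c u : Fin K → ℝ),
      (∀ k, 0 ≤ c k) ∧ δ + ∑ k, c k ≤ d ∧
      ∀ s : ℝ, S.sup' hS (fun p => p.1 + p.2 * s)
        = γ + δ * s + ∑ k, c k * max (s - u k) 0 := by
  induction S using Finset.strongInduction with
  | _ S ih =>
    intro hS d hd
    obtain ⟨f, hfS, hfmax⟩ := Finset.exists_max_image S Prod.snd hS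
    by_cases hS' : (S.erase f).Nonempty
    · -- main case
      obtain ⟨γ, δ, K, c, u, hc, hslope, hrep⟩ :=
        ih (S.erase f) (Finset.erase_ssubset hfS) hS' f.2
          (fun p hp => hfmax p (Finset.mem_of_mem_erase hp))
      have hsup : ∀ s : ℝ, S.sup' hS (fun p => p.1 + p.2 * s)
          = max (f.1 + f.2 * s) ((S.erase f).sup' hS' (fun p => p.1 + p.2 * s)) := by
        intro s
        rw [Finset.sup'_congr hS (Finset.insert_erase hfS).symm (fun x _ => rfl),
          Finset.sup'_insert]
      set F : ℝ → ℝ := fun s => γ + δ * s + ∑ k, c k * max (s - u k) 0 with hF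
      have hFd : ∀ s1 s2 : ℝ, s1 ≤ s2 → F s2 - F s1 ≤ f.2 * (s2 - s1) := by
        intro s1 s2 h
        have key : ∑ k, c k * max (s2 - u k) 0 - ∑ k, c k * max (s1 - u k) 0
            ≤ (∑ k, c k) * (s2 - s1) := by
          rw [← Finset.sum_sub_distrib, Finset.sum_mul]
          apply Finset.sum_le_sum
          intro k _
          have := hinge_incr (u := u k) h
          have := hc k
          nlinarith
        simp only [hF]
        nlinarith [key, hslope, hc]
      set D : ℝ → ℝ := fun s => f.1 + f.2 * s - F s with hD
      have hDmono : Monotone D := by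
        intro s1 s2 h
        have := hFd s1 s2 h
        simp only [hD]
        nlinarith
      have hDcont : Continuous D := by
        simp only [hD, hF]
        fun_prop
      by_cases hAne : {s : ℝ | 0 < D s}.Nonempty
      · by_cases hAcne : {s : ℝ | 0 < D s}ᶜ.Nonempty
        · -- genuine crossing
          obtain ⟨z, hz⟩ := hAcne
          simp only [Set.mem_compl_iff, Set.mem_setOf_eq, not_lt] at hz
          have hbdd : BddBelow {s : ℝ | 0 < D s} := by
            refine ⟨z, fun a ha => ?_⟩
            by_contra hlt
            push_neg at hlt
            exact absurd (lt_of_lt_of_le ha (hDmono hlt.le)) (not_lt.2 hz)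
          set u₀ : ℝ := sInf {s : ℝ | 0 < D s} with hu₀
          have hlow : ∀ s, s < u₀ → D s ≤ 0 := by
            intro s hs
            by_contra hpos
            push_neg at hpos
            exact absurd (csInf_le hbdd hpos) (not_le.2 hs)
          have hhigh : ∀ s, u₀ < s → 0 < D s := by
            intro s hs
            obtain ⟨a, ha, has⟩ := exists_lt_of_csInf_lt hAne hs
            exact lt_of_lt_of_le ha (hDmono has.le)
          have hDu₀ : D u₀ = 0 := by
            rcases lt_trichotomy (D u₀) 0 with h | h | h
            · exfalso
              have hopen : IsOpen {s : ℝ | D s < 0} := isOpen_lt hDcont continuous_const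
              obtain ⟨ε, hε, hball⟩ := Metric.isOpen_iff.1 hopen u₀ h
              have hmem : u₀ + ε / 2 ∈ Metric.ball u₀ ε := by
                rw [Metric.mem_ball, Real.dist_eq,
                  show u₀ + ε / 2 - u₀ = ε / 2 by ring, abs_of_pos (by linarith)]
                linarith
              have := hball hmem
              simp only [Set.mem_setOf_eq] at this
              exact absurd (hhigh _ (by linarith)) (not_lt.2 this.le)
            · exact h
            · exfalso
              have hopen : IsOpen {s : ℝ | 0 < D s} := isOpen_lt continuous_const hDcont
              obtain ⟨ε, hε, hball⟩ := Metric.isOpen_iff.1 hopen u₀ h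
              have hmem : u₀ - ε / 2 ∈ Metric.ball u₀ ε := by
                rw [Metric.mem_ball, Real.dist_eq,
                  show u₀ - ε / 2 - u₀ = -(ε / 2) by ring, abs_neg, abs_of_pos (by linarith)]
                linarith
              have := hball hmem
              simp only [Set.mem_setOf_eq] at this
              exact absurd (hlow _ (by linarith)) (not_le.2 this)
          set c₀ : ℝ := f.2 - δ - ∑ k, (if u k < u₀ then c k else 0) with hc₀
          have hsum0 : ∑ k, (if u k < u₀ then c k else 0) ≤ ∑ k, c k :=
            Finset.sum_le_sum fun k _ => by split <;> simp [hc k]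
          have hc₀nn : 0 ≤ c₀ := by
            simp only [hc₀]
            linarith
          refine ⟨γ, δ, K + 1, Fin.cons c₀ (fun k => if u k < u₀ then c k else 0),
            Fin.cons u₀ u, ?_, ?_, ?_⟩
          · intro k
            refine Fin.cases ?_ ?_ k
            · simpa using hc₀nn
            · intro k'
              simp only [Fin.cons_succ]
              split <;> simp [hc k']
          · rw [Fin.sum_univ_succ]
            simp only [Fin.cons_succ, Fin.cons_zero, hc₀]
            have := hd f hfS
            linarith
          · intro s
            rw [hsup s, hrep s, Fin.sum_univ_succ]
            simp only [Fin.cons_succ, Fin.cons_zero]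
            rcases le_total s u₀ with hs | hs
            · -- left of crossing: envelope is F s
              have hDs : D s ≤ 0 := by
                rcases eq_or_lt_of_le hs with h | h
                · rw [h, hDu₀]
                · exact (hlow s h)
              have hmax : max (f.1 + f.2 * s) (γ + δ * s + ∑ k, c k * max (s - u k) 0)
                  = γ + δ * s + ∑ k, c k * max (s - u k) 0 := by
                apply max_eq_right
                have : F s = γ + δ * s + ∑ k, c k * max (s - u k) 0 := by rw [hF]
                simp only [hD] at hDs
                linarith
              rw [hmax]
              have h₀ : max (s - u₀) 0 = 0 := by
                apply max_eq_right
                linarith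
              have hterm : ∑ k, (if u k < u₀ then c k else 0) * max (s - u k) 0
                  = ∑ k, c k * max (s - u k) 0 := by
                apply Finset.sum_congr rfl
                intro k _
                split
                · rfl
                · rename_i hk
                  push_neg at hk
                  have : max (s - u k) 0 = 0 := max_eq_right (by linarith)
                  simp [this]
              rw [h₀, hterm]
              ring
            · -- right of crossing: envelope is the line f
              have hDs : 0 ≤ D s := by
                rcases eq_or_lt_of_le hs with h | h
                · rw [← h, hDu₀]
                · exact (hhigh s h).le
              have hmax : max (f.1 + f.2 * s) (γ + δ * s + ∑ k, c k * max (s - u k) 0)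
                  = f.1 + f.2 * s := by
                apply max_eq_left
                have : F s = γ + δ * s + ∑ k, c k * max (s - u k) 0 := by rw [hF]
                simp only [hD] at hDs
                linarith
              rw [hmax]
              have hFu₀ : f.1 + f.2 * u₀ = γ + δ * u₀ + ∑ k, c k * max (u₀ - u k) 0 := by
                have : F u₀ = γ + δ * u₀ + ∑ k, c k * max (u₀ - u k) 0 := by rw [hF]
                simp only [hD] at hDu₀
                linarith
              have h₀ : max (s - u₀) 0 = s - u₀ := max_eq_left (by linarith)
              have hsum : (∑ k, (if u k < u₀ then c k else 0) * max (s - u k) 0)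
                  - (∑ k, c k * max (u₀ - u k) 0)
                  = (∑ k, (if u k < u₀ then c k else 0)) * (s - u₀) := by
                rw [← Finset.sum_sub_distrib, Finset.sum_mul]
                apply Finset.sum_congr rfl
                intro k _
                split
                · rename_i hk
                  have h1 : max (s - u k) 0 = s - u k := max_eq_left (by linarith)
                  have h2 : max (u₀ - u k) 0 = u₀ - u k := max_eq_left (by linarith)
                  rw [h1, h2]; ring
                · rename_i hk
                  push_neg at hk
                  have h2 : max (u₀ - u k) 0 = 0 := max_eq_right (by linarith)
                  simp [h2]
              rw [h₀]
              simp only [hc₀] at hsum ⊢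
              linarith [hsum]
        · -- the line f dominates everywhere
          refine ⟨f.1, f.2, 0, ![], ![], by simp, by simpa using hd f hfS, ?_⟩
          intro s
          rw [hsup s, hrep s]
          have hs : 0 < D s := by
            by_contra hns
            exact hAcne ⟨s, by simpa using hns⟩
          simp only [hD, hF] at hs
          have hmax : max (f.1 + f.2 * s) (γ + δ * s + ∑ k, c k * max (s - u k) 0)
              = f.1 + f.2 * s := max_eq_left (by linarith)
          rw [hmax]
          simp
      · -- F dominates everywhere
        refine ⟨γ, δ, K, c, u, hc, le_trans hslope (hd f hfS), ?_⟩
        intro s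
        rw [hsup s, hrep s]
        have hs : D s ≤ 0 := by
          by_contra hns
          push_neg at hns
          exact hAne ⟨s, hns⟩
        simp only [hD, hF] at hs
        exact max_eq_right (by linarith)
    · -- S = {f}
      have hSf : S = {f} := by
        rcases Finset.eq_singleton_or_nontrivial hfS with h | h
        · exact h
        · exfalso
          obtain ⟨g, hgS, hgf⟩ := h.exists_ne f
          exact hS' ⟨g, Finset.mem_erase.2 ⟨hgf, hgS⟩⟩
      refine ⟨f.1, f.2, 0, ![], ![], by simp, by simpa using hd f hfS, ?_⟩
      intro s
      subst hSf
      simp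

lemma rep2d {m : ℕ} (a b : Fin m → ℝ) (hne : (Finset.univ : Finset (Fin m)).Nonempty) :
    ∃ (α β : ℝ) (K : ℕ) (c g h : Fin K → ℝ), (∀ k, 0 ≤ c k) ∧
      ∀ x y : ℝ, 0 ≤ x → 0 ≤ y →
        Finset.univ.sup' hne (fun i => a i * x + b i * y)
          = α * x + β * y + ∑ k, c k * max (g k * x + h k * y) 0 := by
  classical
  set d : ℝ := Finset.univ.sup' hne (fun i => b i - a i) with hd
  have hdb : ∀ r ∈ Finset.univ.image (fun i => (a i, b i - a i)), Prod.snd r ≤ d := by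
    intro r hr
    simp only [Finset.mem_image] at hr
    obtain ⟨i, _, rfl⟩ := hr
    exact Finset.le_sup' (fun i => b i - a i) (Finset.mem_univ i)
  obtain ⟨γ, δ, K, c, u, hc, _, hrep⟩ :=
    rep_lemma (Finset.univ.image (fun i => (a i, b i - a i))) (hne.image _) d hdb
  have hsup : ∀ s : ℝ, Finset.univ.sup' hne (fun i => a i + (b i - a i) * s)
      = γ + δ * s + ∑ k, c k * max (s - u k) 0 := by
    intro s
    rw [← hrep s, Finset.sup'_image]
    rfl
  refine ⟨γ, γ + δ, K, c, fun k => -u k, fun k => 1 - u k, hc, ?_⟩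
  intro x y hx hy
  rcases eq_or_lt_of_le (by linarith : (0:ℝ) ≤ x + y) with hσ | hσ
  · have hx0 : x = 0 := by linarith
    have hy0 : y = 0 := by linarith
    subst hx0; subst hy0
    rw [Finset.sup'_congr hne rfl (fun i _ => by ring_nf : ∀ i ∈ Finset.univ,
      a i * 0 + b i * 0 = (0:ℝ))]
    simp [Finset.sup'_const]
  · set σ : ℝ := x + y with hσdef
    have hσ0 : σ ≠ 0 := ne_of_gt hσ
    have key := hsup (y / σ)
    calc Finset.univ.sup' hne (fun i => a i * x + b i * y)
        = Finset.univ.sup' hne (fun i => σ * (a i + (b i - a i) * (y / σ))) := by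
          apply Finset.sup'_congr hne rfl
          intro i _
          field_simp
          ring
      _ = σ * Finset.univ.sup' hne (fun i => a i + (b i - a i) * (y / σ)) := by
          rw [comp_sup'_eq_sup'_comp hne (fun r => σ * r)
            (fun r1 r2 => mul_max_of_nonneg _ _ hσ.le)]
          rfl
      _ = σ * (γ + δ * (y / σ) + ∑ k, c k * max (y / σ - u k) 0) := by rw [key]
      _ = γ * x + (γ + δ) * y + ∑ k, c k * max (-u k * x + (1 - u k) * y) 0 := by
          rw [mul_add, Finset.mul_sum]
          congr 1
          · field_simp
            ring
          · apply Finset.sum_congr rfl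
            intro k _
            have harg : σ * (y / σ - u k) = -u k * x + (1 - u k) * y := by
              field_simp
              ring
            rw [show σ * (c k * max (y / σ - u k) 0) = c k * (σ * max (y / σ - u k) 0) by ring,
              mul_max_of_nonneg _ _ hσ.le, mul_zero, harg]

lemma stepA {n m : ℕ} (p q : Fin n → ℝ) (p' q' : Fin m → ℝ)
    (hsub : testingRegion p' q' ⊆ testingRegion p q) (a b : ℝ) :
    ∑ i, max (a * p' i + b * q' i) 0 ≤ ∑ j, max (a * p j + b * q j) 0 := by
  classical
  set t' : Fin m → ℝ := fun i => if 0 ≤ a * p' i + b * q' i then 1 else 0 with ht'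
  have hmem : ((∑ i, p' i * t' i, ∑ i, q' i * t' i) : ℝ × ℝ) ∈ testingRegion p' q' :=
    ⟨t', fun i => by constructor <;> simp only [ht'] <;> split <;> norm_num, rfl⟩
  obtain ⟨t, htb, hte⟩ := hsub hmem
  rw [Prod.mk.injEq] at hte
  obtain ⟨h1, h2⟩ := hte
  calc ∑ i, max (a * p' i + b * q' i) 0
      = ∑ i, (a * (p' i * t' i) + b * (q' i * t' i)) := by
        apply Finset.sum_congr rfl
        intro i _
        simp only [ht']
        split
        · rename_i hpos
          rw [max_eq_left hpos]
          ring
        · rename_i hneg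
          push_neg at hneg
          rw [max_eq_right hneg.le]
          ring
    _ = a * ∑ i, p' i * t' i + b * ∑ i, q' i * t' i := by
        rw [Finset.mul_sum, Finset.mul_sum, ← Finset.sum_add_distrib]
    _ = a * ∑ j, p j * t j + b * ∑ j, q j * t j := by rw [h1, h2]
    _ = ∑ j, (a * p j + b * q j) * t j := by
        rw [Finset.mul_sum, Finset.mul_sum, ← Finset.sum_add_distrib]
        apply Finset.sum_congr rfl
        intro j _
        ring
    _ ≤ ∑ j, max (a * p j + b * q j) 0 := by
        apply Finset.sum_le_sum
        intro j _
        obtain ⟨h0, h1'⟩ := htb j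
        rcases le_total 0 (a * p j + b * q j) with hz | hz
        · calc (a * p j + b * q j) * t j ≤ (a * p j + b * q j) * 1 := by nlinarith
            _ ≤ max (a * p j + b * q j) 0 := by rw [mul_one]; exact le_max_left _ _
        · calc (a * p j + b * q j) * t j ≤ 0 := by nlinarith
            _ ≤ max (a * p j + b * q j) 0 := le_max_right _ _

lemma key_lemma {n m : ℕ} (p q : Fin n → ℝ) (p' q' : Fin m → ℝ)
    (hps : ∑ j, p j = 1) (hqs : ∑ j, q j = 1) (hp's : ∑ i, p' i = 1) (hq's : ∑ i, q' i = 1)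
    (hpn : ∀ j, 0 ≤ p j) (hqn : ∀ j, 0 ≤ q j) (hp'n : ∀ i, 0 ≤ p' i) (hq'n : ∀ i, 0 ≤ q' i)
    (hA : ∀ a b : ℝ, ∑ i, max (a * p' i + b * q' i) 0 ≤ ∑ j, max (a * p j + b * q j) 0)
    (hne : (Finset.univ : Finset (Fin m)).Nonempty) (a b : Fin m → ℝ) :
    ∑ i, (a i * p' i + b i * q' i)
      ≤ ∑ j, Finset.univ.sup' hne (fun i => a i * p j + b i * q j) := by
  obtain ⟨α, β, K, c, g, h, hc, hid⟩ := rep2d a b hne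
  have swap1 : ∑ i, ∑ k, c k * max (g k * p' i + h k * q' i) 0
      = ∑ k, c k * ∑ i, max (g k * p' i + h k * q' i) 0 := by
    rw [Finset.sum_comm]
    exact Finset.sum_congr rfl fun k _ => (Finset.mul_sum _ _ _).symm
  have swap2 : ∑ j, ∑ k, c k * max (g k * p j + h k * q j) 0
      = ∑ k, c k * ∑ j, max (g k * p j + h k * q j) 0 := by
    rw [Finset.sum_comm]
    exact Finset.sum_congr rfl fun k _ => (Finset.mul_sum _ _ _).symm
  calc ∑ i, (a i * p' i + b i * q' i)
      ≤ ∑ i, Finset.univ.sup' hne (fun i' => a i' * p' i + b i' * q' i) := by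
        apply Finset.sum_le_sum
        intro i _
        exact Finset.le_sup' (fun i' => a i' * p' i + b i' * q' i) (Finset.mem_univ i)
    _ = ∑ i, (α * p' i + β * q' i + ∑ k, c k * max (g k * p' i + h k * q' i) 0) :=
        Finset.sum_congr rfl fun i _ => hid (p' i) (q' i) (hp'n i) (hq'n i)
    _ = α + β + ∑ k, c k * ∑ i, max (g k * p' i + h k * q' i) 0 := by
        rw [Finset.sum_add_distrib, Finset.sum_add_distrib, ← Finset.mul_sum, ← Finset.mul_sum,
          swap1, hp's, hq's, mul_one, mul_one]
    _ ≤ α + β + ∑ k, c k * ∑ j, max (g k * p j + h k * q j) 0 := by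
        apply add_le_add le_rfl
        apply Finset.sum_le_sum
        intro k _
        exact mul_le_mul_of_nonneg_left (hA (g k) (h k)) (hc k)
    _ = ∑ j, (α * p j + β * q j + ∑ k, c k * max (g k * p j + h k * q j) 0) := by
        rw [Finset.sum_add_distrib, Finset.sum_add_distrib, ← Finset.mul_sum, ← Finset.mul_sum,
          swap2, hps, hqs, mul_one, mul_one]
    _ = ∑ j, Finset.univ.sup' hne (fun i => a i * p j + b i * q j) :=
        Finset.sum_congr rfl fun j _ => (hid (p j) (q j) (hpn j) (hqn j)).symm

lemma Kcompact {n m : ℕ} (p q : Fin n → ℝ) :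
    IsCompact {y : (Fin m → ℝ) × (Fin m → ℝ) | ∃ E : Fin m → Fin n → ℝ,
      ((∀ i j, 0 ≤ E i j) ∧ ∀ j, ∑ i, E i j = 1) ∧
      ((fun i => ∑ j, E i j * p j, fun i => ∑ j, E i j * q j) :
        (Fin m → ℝ) × (Fin m → ℝ)) = y} := by
  have hSc : IsCompact {E : Fin m → Fin n → ℝ | (∀ i j, 0 ≤ E i j) ∧ ∀ j, ∑ i, E i j = 1} := by
    apply IsCompact.of_isClosed_subset
      (isCompact_univ_pi (fun i => isCompact_univ_pi (fun j => isCompact_Icc (a := (0:ℝ)) (b := 1))))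
    · have : {E : Fin m → Fin n → ℝ | (∀ i j, 0 ≤ E i j) ∧ ∀ j, ∑ i, E i j = 1}
          = (⋂ i, ⋂ j, {E : Fin m → Fin n → ℝ | 0 ≤ E i j})
            ∩ ⋂ j, {E : Fin m → Fin n → ℝ | ∑ i, E i j = 1} := by
        ext E
        simp only [Set.mem_setOf_eq, Set.mem_inter_iff, Set.mem_iInter]
      rw [this]
      refine IsClosed.inter ?_ ?_
      · exact isClosed_iInter fun i => isClosed_iInter fun j =>
          isClosed_le continuous_const (by fun_prop)
      · exact isClosed_iInter fun j => isClosed_eq (by fun_prop) continuous_const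
    · intro E hE
      rw [Set.mem_univ_pi]
      intro i
      rw [Set.mem_univ_pi]
      intro j
      refine ⟨hE.1 i j, ?_⟩
      calc E i j ≤ ∑ i', E i' j :=
            Finset.single_le_sum (f := fun i' => E i' j) (fun i' _ => hE.1 i' j)
              (Finset.mem_univ i)
        _ = 1 := hE.2 j
  have hcont : Continuous (fun E : Fin m → Fin n → ℝ =>
      ((fun i => ∑ j, E i j * p j, fun i => ∑ j, E i j * q j) :
        (Fin m → ℝ) × (Fin m → ℝ))) := by fun_prop
  have himg : {y : (Fin m → ℝ) × (Fin m → ℝ) | ∃ E : Fin m → Fin n → ℝ,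
      ((∀ i j, 0 ≤ E i j) ∧ ∀ j, ∑ i, E i j = 1) ∧
      ((fun i => ∑ j, E i j * p j, fun i => ∑ j, E i j * q j) :
        (Fin m → ℝ) × (Fin m → ℝ)) = y}
      = (fun E : Fin m → Fin n → ℝ =>
          ((fun i => ∑ j, E i j * p j, fun i => ∑ j, E i j * q j) :
            (Fin m → ℝ) × (Fin m → ℝ))) ''
        {E : Fin m → Fin n → ℝ | (∀ i j, 0 ≤ E i j) ∧ ∀ j, ∑ i, E i j = 1} := by
    ext y
    simp only [Set.mem_setOf_eq, Set.mem_image]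
  rw [himg]
  exact hSc.image hcont

lemma Kconvex {n m : ℕ} (p q : Fin n → ℝ) :
    Convex ℝ {y : (Fin m → ℝ) × (Fin m → ℝ) | ∃ E : Fin m → Fin n → ℝ,
      ((∀ i j, 0 ≤ E i j) ∧ ∀ j, ∑ i, E i j = 1) ∧
      ((fun i => ∑ j, E i j * p j, fun i => ∑ j, E i j * q j) :
        (Fin m → ℝ) × (Fin m → ℝ)) = y} := by
  rintro y1 ⟨E1, ⟨hE1n, hE1c⟩, hE1y⟩ y2 ⟨E2, ⟨hE2n, hE2c⟩, hE2y⟩ a b ha hb hab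
  refine ⟨fun i j => a * E1 i j + b * E2 i j, ⟨⟨?_, ?_⟩, ?_⟩⟩
  · intro i j
    exact add_nonneg (mul_nonneg ha (hE1n i j)) (mul_nonneg hb (hE2n i j))
  · intro j
    rw [Finset.sum_add_distrib, ← Finset.mul_sum, ← Finset.mul_sum, hE1c j, hE2c j]
    linarith
  · rw [← hE1y, ← hE2y]
    refine Prod.ext ?_ ?_ <;> funext i <;>
      simp only [Prod.fst_add, Prod.snd_add, Prod.smul_fst, Prod.smul_snd, Pi.add_apply,
        Pi.smul_apply, smul_eq_mul] <;>
    · rw [Finset.mul_sum, Finset.mul_sum, ← Finset.sum_add_distrib]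
      apply Finset.sum_congr rfl
      intro j _
      ring

lemma clm_decomp {m : ℕ} (f : ((Fin m → ℝ) × (Fin m → ℝ)) →L[ℝ] ℝ) (v w : Fin m → ℝ) :
    f (v, w) = ∑ i, v i * f (Pi.single i 1, 0) + ∑ i, w i * f (0, Pi.single i 1) := by
  classical
  have hv : ((v, w) : (Fin m → ℝ) × (Fin m → ℝ))
      = (∑ i, v i • (((Pi.single i 1 : Fin m → ℝ), (0 : Fin m → ℝ)) :
          (Fin m → ℝ) × (Fin m → ℝ)))
        + ∑ i, w i • (((0 : Fin m → ℝ), (Pi.single i 1 : Fin m → ℝ)) :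
          (Fin m → ℝ) × (Fin m → ℝ)) := by
    refine Prod.ext ?_ ?_ <;>
      simp only [Prod.fst_add, Prod.snd_add, Prod.fst_sum, Prod.snd_sum, Prod.smul_fst,
        Prod.smul_snd, smul_zero, Finset.sum_const_zero, add_zero, zero_add] <;>
      funext x <;>
      simp [Finset.sum_apply, Pi.single_apply, mul_ite, Finset.sum_ite_eq']
  rw [hv, map_add, map_sum, map_sum]
  simp only [map_smul, smul_eq_mul]

/-- Blackwell's theorem: `(p,q)` relatively majorizes `(p',q')` iff the testing
region of `(p',q')` is contained in that of `(p,q)`. -/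
theorem stmt5
    (n m : ℕ) (p q : Fin n → ℝ) (p' q' : Fin m → ℝ)
    (hp : IsProbVec p) (hq : IsProbVec q) (hp' : IsProbVec p') (hq' : IsProbVec q') :
    (∃ E : Matrix (Fin m) (Fin n) ℝ, IsStochastic E ∧
        E.mulVec p = p' ∧ E.mulVec q = q') ↔
      testingRegion p' q' ⊆ testingRegion p q := by
  classical
  constructor
  · -- easy direction
    rintro ⟨E, ⟨hEnn, hEcol⟩, hEp, hEq⟩ y ⟨t', ht'b, rfl⟩
    refine ⟨fun j => ∑ i, t' i * E i j, fun j => ⟨?_, ?_⟩, ?_⟩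
    · exact Finset.sum_nonneg fun i _ => mul_nonneg (ht'b i).1 (hEnn i j)
    · calc ∑ i, t' i * E i j ≤ ∑ i, E i j := by
            apply Finset.sum_le_sum
            intro i _
            nlinarith [(ht'b i).1, (ht'b i).2, hEnn i j]
        _ = 1 := hEcol j
    · have hmv : ∀ (v : Fin n → ℝ) (i : Fin m), E.mulVec v i = ∑ j, E i j * v j := by
        intro v i
        simp [Matrix.mulVec, dotProduct]
      have hswap : ∀ v : Fin n → ℝ, E.mulVec v = (fun i => ∑ j, E i j * v j) →
          ∑ j, v j * ∑ i, t' i * E i j = ∑ i, (E.mulVec v i) * t' i := by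
        intro v _
        calc ∑ j, v j * ∑ i, t' i * E i j = ∑ j, ∑ i, (E i j * v j) * t' i := by
              apply Finset.sum_congr rfl
              intro j _
              rw [Finset.mul_sum]
              apply Finset.sum_congr rfl
              intro i _
              ring
          _ = ∑ i, ∑ j, (E i j * v j) * t' i := Finset.sum_comm
          _ = ∑ i, (E.mulVec v i) * t' i := by
              apply Finset.sum_congr rfl
              intro i _
              rw [hmv v i, Finset.sum_mul]
      rw [Prod.mk.injEq]
      constructor
      · rw [hswap p rfl, hEp]
      · rw [hswap q rfl, hEq]
  · -- hard direction
    intro hsub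
    by_contra hno
    have hm : 0 < m := by
      rcases Nat.eq_zero_or_pos m with h | h
      · subst h
        have := hp'.2
        simp at this
      · exact h
    have hne : (Finset.univ : Finset (Fin m)).Nonempty := ⟨⟨0, hm⟩, Finset.mem_univ _⟩
    have hnotin : ((p', q') : (Fin m → ℝ) × (Fin m → ℝ)) ∉
        {y : (Fin m → ℝ) × (Fin m → ℝ) | ∃ E : Fin m → Fin n → ℝ,
          ((∀ i j, 0 ≤ E i j) ∧ ∀ j, ∑ i, E i j = 1) ∧
          ((fun i => ∑ j, E i j * p j, fun i => ∑ j, E i j * q j) :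
            (Fin m → ℝ) × (Fin m → ℝ)) = y} := by
      rintro ⟨E, hE1, hE2⟩
      apply hno
      rw [Prod.mk.injEq] at hE2
      refine ⟨Matrix.of E, ⟨hE1.1, hE1.2⟩, ?_, ?_⟩
      · funext i
        rw [show (Matrix.of E).mulVec p i = ∑ j, E i j * p j by simp [Matrix.mulVec, dotProduct]]
        exact congrFun hE2.1 i
      · funext i
        rw [show (Matrix.of E).mulVec q i = ∑ j, E i j * q j by simp [Matrix.mulVec, dotProduct]]
        exact congrFun hE2.2 i
    obtain ⟨f, u, hfK, hfx⟩ :=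
      geometric_hahn_banach_closed_point (Kconvex p q) (Kcompact p q).isClosed hnotin
    set a : Fin m → ℝ := fun i => f (Pi.single i 1, 0) with ha
    set b : Fin m → ℝ := fun i => f (0, Pi.single i 1) with hb
    have hdec : ∀ v w : Fin m → ℝ, f (v, w) = ∑ i, v i * a i + ∑ i, w i * b i := by
      intro v w
      rw [clm_decomp f v w]
    -- the maximizing deterministic matrix
    have hargmax : ∀ j : Fin n, ∃ i₀ : Fin m, ∀ i : Fin m,
        a i * p j + b i * q j ≤ a i₀ * p j + b i₀ * q j := by
      intro j
      obtain ⟨i₀, _, hi₀⟩ := Finset.exists_max_image Finset.univ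
        (fun i => a i * p j + b i * q j) hne
      exact ⟨i₀, fun i => hi₀ i (Finset.mem_univ i)⟩
    choose i₀ hi₀ using hargmax
    set Estar : Fin m → Fin n → ℝ := fun i j => if i = i₀ j then 1 else 0 with hEstar
    have hEstarK : ((fun i => ∑ j, Estar i j * p j, fun i => ∑ j, Estar i j * q j) :
        (Fin m → ℝ) × (Fin m → ℝ)) ∈
        {y : (Fin m → ℝ) × (Fin m → ℝ) | ∃ E : Fin m → Fin n → ℝ,
          ((∀ i j, 0 ≤ E i j) ∧ ∀ j, ∑ i, E i j = 1) ∧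
          ((fun i => ∑ j, E i j * p j, fun i => ∑ j, E i j * q j) :
            (Fin m → ℝ) × (Fin m → ℝ)) = y} := by
      refine ⟨Estar, ⟨⟨?_, ?_⟩, rfl⟩⟩
      · intro i j
        simp only [hEstar]
        split <;> norm_num
      · intro j
        simp only [hEstar]
        rw [Finset.sum_ite_eq' Finset.univ (i₀ j) (fun _ => (1:ℝ))]
        simp
    -- compute f at the image of Estar
    have hfE : f ((fun i => ∑ j, Estar i j * p j, fun i => ∑ j, Estar i j * q j) :
        (Fin m → ℝ) × (Fin m → ℝ))
        = ∑ j, (a (i₀ j) * p j + b (i₀ j) * q j) := by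
      rw [hdec]
      have h1 : ∑ i, (∑ j, Estar i j * p j) * a i = ∑ j, a (i₀ j) * p j := by
        calc ∑ i, (∑ j, Estar i j * p j) * a i
            = ∑ i, ∑ j, (if i = i₀ j then p j * a i else 0) := by
              apply Finset.sum_congr rfl
              intro i _
              rw [Finset.sum_mul]
              apply Finset.sum_congr rfl
              intro j _
              simp only [hEstar]
              split <;> ring
          _ = ∑ j, ∑ i, (if i = i₀ j then p j * a i else 0) := Finset.sum_comm
          _ = ∑ j, a (i₀ j) * p j := by
              apply Finset.sum_congr rfl
              intro j _
              rw [Finset.sum_ite_eq' Finset.univ (i₀ j) (fun i => p j * a i)]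
              simp [mul_comm]
      have h2 : ∑ i, (∑ j, Estar i j * q j) * b i = ∑ j, b (i₀ j) * q j := by
        calc ∑ i, (∑ j, Estar i j * q j) * b i
            = ∑ i, ∑ j, (if i = i₀ j then q j * b i else 0) := by
              apply Finset.sum_congr rfl
              intro i _
              rw [Finset.sum_mul]
              apply Finset.sum_congr rfl
              intro j _
              simp only [hEstar]
              split <;> ring
          _ = ∑ j, ∑ i, (if i = i₀ j then q j * b i else 0) := Finset.sum_comm
          _ = ∑ j, b (i₀ j) * q j := by
              apply Finset.sum_congr rfl
              intro j _
              rw [Finset.sum_ite_eq' Finset.univ (i₀ j) (fun i => q j * b i)]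
              simp [mul_comm]
      rw [h1, h2, ← Finset.sum_add_distrib]
    -- key chain
    have hkey := key_lemma p q p' q' hp.2 hq.2 hp'.2 hq'.2 hp.1 hq.1 hp'.1 hq'.1
      (fun aa bb => stepA p q p' q' hsub aa bb) hne a b
    have hsupval : ∀ j, Finset.univ.sup' hne (fun i => a i * p j + b i * q j)
        = a (i₀ j) * p j + b (i₀ j) * q j := by
      intro j
      apply le_antisymm
      · exact Finset.sup'_le hne _ (fun i _ => hi₀ j i)
      · exact Finset.le_sup' (fun i => a i * p j + b i * q j) (Finset.mem_univ (i₀ j))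
    have hfp' : f ((p', q') : (Fin m → ℝ) × (Fin m → ℝ)) = ∑ i, (a i * p' i + b i * q' i) := by
      rw [hdec, ← Finset.sum_add_distrib]
      apply Finset.sum_congr rfl
      intro i _
      ring
    have hlt1 : f ((fun i => ∑ j, Estar i j * p j, fun i => ∑ j, Estar i j * q j) :
        (Fin m → ℝ) × (Fin m → ℝ)) < u := hfK _ hEstarK
    have hchain : f ((p', q') : (Fin m → ℝ) × (Fin m → ℝ))
        ≤ ∑ j, (a (i₀ j) * p j + b (i₀ j) * q j) := by
      rw [hfp']
      calc ∑ i, (a i * p' i + b i * q' i)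
          ≤ ∑ j, Finset.univ.sup' hne (fun i => a i * p j + b i * q j) := hkey
        _ = ∑ j, (a (i₀ j) * p j + b (i₀ j) * q j) :=
            Finset.sum_congr rfl fun j _ => hsupval j
    rw [← hfE] at hchain
    linarith
end

section
/- Let r_1, ..., r_a be probability vectors in R^n and s a probability vector in R^m. Then max{ H(p) : p a probability vector in R^{nm}, r_x ⊗ s ≺ p for all x } ≤ log_2 m + max{ H(q) : q a probability vector in R^n, r_x ≺ q for all x }, where H is Shannon entropy and ≺ denotes majorization (v ≺ p means p can be transformed to v by a doubly stochastic matrix). -/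
open scoped BigOperators

/-- `Majorizes w v`: `v ≺ w` (majorization, finset formulation for probability
vectors of possibly different dimensions). -/
def Majorizes {α β : Type} [Fintype α] [Fintype β] (w : β → ℝ) (v : α → ℝ) : Prop :=
  ∀ S : Finset α, ∃ T : Finset β, T.card ≤ S.card ∧ ∑ i ∈ S, v i ≤ ∑ j ∈ T, w j

/-- Shannon entropy, base 2. -/
noncomputable def entropy {ι : Type} [Fintype ι] (p : ι → ℝ) : ℝ :=
  -∑ i, p i * Real.logb 2 (p i)

lemma aux_strictMono_le {k N : ℕ} (f : Fin k → Fin N) (hf : StrictMono f) (i : Fin k) :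
    (i : ℕ) ≤ (f i : ℕ) := by
  induction' h : (i : ℕ) with c ih generalizing i
  · exact Nat.zero_le _
  · have hc : c < k := lt_trans (by omega) i.2
    have hlt : (⟨c, hc⟩ : Fin k) < i := by simp [Fin.lt_def, h]
    have h1 := hf hlt
    have h2 := ih ⟨c, hc⟩ rfl
    rw [Fin.lt_def] at h1
    omega

lemma aux_sum_le_topsum {N : ℕ} (D : Fin N → ℝ) (hD : Antitone D) (hD0 : ∀ i, 0 ≤ D i)
    (T : Finset (Fin N)) (t : ℕ) (ht : T.card ≤ t) :
    ∑ i ∈ T, D i ≤ ∑ i ∈ Finset.univ.filter (fun i : Fin N => (i : ℕ) < t), D i := by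
  have hkN : T.card ≤ N := by simpa using T.card_le_univ
  set k := T.card with hk
  have e := T.orderIsoOfFin (rfl : T.card = k)
  have hsumT : ∑ i ∈ T, D i = ∑ i : Fin k, D (e i) := by
    rw [← Finset.sum_coe_sort T D]
    exact (Equiv.sum_comp e.toEquiv (fun x => D x)).symm
  have hstep1 : ∑ i ∈ T, D i ≤ ∑ i ∈ Finset.univ.filter (fun i : Fin N => (i : ℕ) < k), D i := by
    have hset : Finset.univ.filter (fun i : Fin N => (i : ℕ) < k)
        = Finset.map (Fin.castLEEmb hkN) Finset.univ := by
      ext x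
      simp only [Finset.mem_filter, Finset.mem_univ, true_and, Finset.mem_map,
        Fin.castLEEmb, Fin.castLE]
      constructor
      · intro hx; exact ⟨⟨x, hx⟩, by simp [Fin.ext_iff]⟩
      · rintro ⟨i, _, rfl⟩; exact i.2
    rw [hsumT, hset, Finset.sum_map]
    apply Finset.sum_le_sum
    intro i _
    apply hD
    have hsm : StrictMono (fun i : Fin k => ((e i : Fin N))) := by
      intro a b hab
      exact Subtype.coe_lt_coe.mpr (e.strictMono hab)
    have := aux_strictMono_le _ hsm i
    simpa [Fin.le_def] using this
  refine hstep1.trans (Finset.sum_le_sum_of_subset_of_nonneg ?_ (fun i _ _ => hD0 i))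
  intro x hx
  simp only [Finset.mem_filter, Finset.mem_univ, true_and] at hx ⊢
  omega

lemma aux_block (m : ℕ) (hm : 0 < m) (x : Fin m → ℝ) (hx : ∀ j, 0 ≤ x j) :
    -∑ j, x j * Real.log (x j) ≤
      -((∑ j, x j) * Real.log (∑ j, x j)) + (∑ j, x j) * Real.log m := by
  set Q := ∑ j, x j with hQ
  have hQ0 : 0 ≤ Q := Finset.sum_nonneg fun j _ => hx j
  rcases eq_or_lt_of_le hQ0 with hQz | hQpos
  · have hz : ∀ j ∈ Finset.univ, x j = 0 :=
      (Finset.sum_eq_zero_iff_of_nonneg (fun j _ => hx j)).mp hQz.symm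
    have h1 : ∑ j, x j * Real.log (x j) = 0 :=
      Finset.sum_eq_zero fun j hj => by rw [hz j hj]; ring
    rw [h1, ← hQz]
    simp
  · have key : ∑ j, x j * (Real.log Q - Real.log m - Real.log (x j)) ≤ 0 := by
      have hterm : ∀ j : Fin m, x j * (Real.log Q - Real.log m - Real.log (x j)) ≤ Q / m - x j := by
        intro j
        rcases eq_or_lt_of_le (hx j) with h0 | hpos
        · rw [← h0]; simp
          positivity
        · have harg : 0 < Q / (m * x j) := by positivity
          have hlog := Real.log_le_sub_one_of_pos harg
          have hrw : Real.log (Q / (m * x j)) = Real.log Q - Real.log m - Real.log (x j) := by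
            rw [Real.log_div (ne_of_gt hQpos) (by positivity),
              Real.log_mul (by positivity) (ne_of_gt hpos)]
            ring
          rw [← hrw]
          calc x j * Real.log (Q / (m * x j)) ≤ x j * (Q / (m * x j) - 1) :=
                mul_le_mul_of_nonneg_left hlog (hx j)
            _ = Q / m - x j := by field_simp
      calc ∑ j, x j * (Real.log Q - Real.log m - Real.log (x j)) ≤ ∑ j : Fin m, (Q / m - x j) :=
            Finset.sum_le_sum fun j _ => hterm j
        _ = m * (Q / m) - Q := by rw [Finset.sum_sub_distrib]; simp [mul_comm]; exact hQ.symm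
        _ = 0 := by field_simp; ring
    have hexp : ∑ j, x j * (Real.log Q - Real.log m - Real.log (x j))
        = Q * Real.log Q - Q * Real.log m - ∑ j, x j * Real.log (x j) := by
      rw [Finset.sum_congr rfl (fun j _ => by ring :
        ∀ j ∈ Finset.univ, x j * (Real.log Q - Real.log m - Real.log (x j))
          = x j * Real.log Q - x j * Real.log m - x j * Real.log (x j))]
      rw [Finset.sum_sub_distrib, Finset.sum_sub_distrib, ← Finset.sum_mul, ← Finset.sum_mul]
    rw [hexp] at key
    linarith

lemma entropy_eq {ι : Type} [Fintype ι] (f : ι → ℝ) :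
    entropy f = (-∑ i, f i * Real.log (f i)) / Real.log 2 := by
  unfold entropy
  rw [neg_div, Finset.sum_div]
  refine congrArg Neg.neg (Finset.sum_congr rfl fun i _ => ?_)
  rw [← Real.log_div_log, mul_div_assoc]

lemma entropy_le {n : ℕ} (hn : 0 < n) (q : Fin n → ℝ) (hq : IsProbVec q) :
    entropy q ≤ Real.logb 2 n := by
  have h := aux_block n hn q hq.1
  rw [hq.2] at h
  simp only [Real.log_one, mul_zero, one_mul, neg_zero, zero_add] at h
  rw [entropy_eq, ← Real.log_div_log]
  have hL2 : (0:ℝ) < Real.log 2 := Real.log_pos one_lt_two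
  exact div_le_div_of_nonneg_right h hL2.le

lemma entropy_nonneg {n : ℕ} (q : Fin n → ℝ) (hq : IsProbVec q) : 0 ≤ entropy q := by
  unfold entropy
  rw [neg_nonneg]
  apply Finset.sum_nonpos
  intro i _
  have h1 : q i ≤ 1 := by
    rw [← hq.2]
    exact Finset.single_le_sum (fun j _ => hq.1 j) (Finset.mem_univ i)
  rcases eq_or_lt_of_le (hq.1 i) with h0 | hpos
  · rw [← h0]; simp
  · have : Real.logb 2 (q i) ≤ 0 := Real.logb_nonpos one_lt_two (hq.1 i) h1
    exact mul_nonpos_of_nonneg_of_nonpos (hq.1 i) this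

lemma aux_exists_q {n m : ℕ} (hm : 0 < m) (p : Fin n × Fin m → ℝ) (hp : IsProbVec p)
    (s : Fin m → ℝ) (hs1 : ∑ j, s j = 1) :
    ∃ q : Fin n → ℝ, IsProbVec q ∧
      (∀ v : Fin n → ℝ, Majorizes p (fun z : Fin n × Fin m => v z.1 * s z.2) → Majorizes q v) ∧
      entropy p ≤ Real.logb 2 m + entropy q := by
  classical
  let E : Fin n × Fin m ≃ Fin (n * m) := finProdFinEquiv
  have hEval : ∀ z : Fin n × Fin m, ((E z : Fin (n*m)) : ℕ) = z.2.val + m * z.1.val := by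
    intro z; simp [E, finProdFinEquiv]
  let P : Fin (n * m) → ℝ := fun i => p (E.symm i)
  let σ : Equiv.Perm (Fin (n * m)) := Tuple.sort P
  let π : Equiv.Perm (Fin (n * m)) := Fin.revPerm.trans σ
  let D : Fin (n * m) → ℝ := fun i => P (π i)
  have hDanti : Antitone D := by
    intro i j hij
    have hmono := Tuple.monotone_sort P
    have : j.rev ≤ i.rev := Fin.rev_le_rev.mpr hij
    exact hmono this
  have hD0 : ∀ i, 0 ≤ D i := fun i => hp.1 _
  have hpz : ∀ z, p z = D (π.symm (E z)) := by
    intro z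
    show p z = P (π (π.symm (E z)))
    rw [Equiv.apply_symm_apply]
    show p z = p (E.symm (E z))
    rw [Equiv.symm_apply_apply]
  let q : Fin n → ℝ := fun k => ∑ j : Fin m, D (E (k, j))
  have hq0 : ∀ k, 0 ≤ q k := fun k => Finset.sum_nonneg fun j _ => hD0 _
  have hblock : ∀ c : ℕ,
      ∑ k ∈ Finset.univ.filter (fun k : Fin n => (k : ℕ) < c), q k
        = ∑ i ∈ Finset.univ.filter (fun i : Fin (n * m) => (i : ℕ) < c * m), D i := by
    intro c
    have himg : (Finset.univ.filter (fun k : Fin n => (k : ℕ) < c) ×ˢ Finset.univ).image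
        (fun z : Fin n × Fin m => E z)
        = Finset.univ.filter (fun i : Fin (n * m) => (i : ℕ) < c * m) := by
      ext i
      simp only [Finset.mem_image, Finset.mem_product, Finset.mem_filter, Finset.mem_univ,
        true_and, and_true]
      constructor
      · rintro ⟨z, hz, rfl⟩
        rw [hEval]
        calc (z.2 : ℕ) + m * (z.1 : ℕ) < m + m * (z.1 : ℕ) := by
              exact Nat.add_lt_add_right z.2.2 _
          _ = m * ((z.1 : ℕ) + 1) := by ring
          _ ≤ m * c := Nat.mul_le_mul_left m hz
          _ = c * m := Nat.mul_comm m c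
      · intro hi
        refine ⟨E.symm i, ?_, Equiv.apply_symm_apply E i⟩
        have h2 := hEval (E.symm i)
        rw [Equiv.apply_symm_apply] at h2
        by_contra hcon
        push_neg at hcon
        have : c * m ≤ m * ((E.symm i).1 : ℕ) :=
          (Nat.mul_comm c m) ▸ Nat.mul_le_mul_left m hcon
        omega
    rw [← himg, Finset.sum_image (fun z _ z' _ h => E.injective h), Finset.sum_product]
  have hDsum : ∑ i, D i = 1 := by
    rw [Equiv.sum_comp π P]
    rw [Equiv.sum_comp E.symm p]
    exact hp.2
  have hqsum : ∑ k, q k = 1 := by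
    have h1 : Finset.univ.filter (fun k : Fin n => (k : ℕ) < n) = Finset.univ := by
      ext k; simp [k.2]
    have h2 : Finset.univ.filter (fun i : Fin (n * m) => (i : ℕ) < n * m) = Finset.univ := by
      ext i; simp [i.2]
    have := hblock n
    rw [h1, h2] at this
    rw [this, hDsum]
  refine ⟨q, ⟨hq0, hqsum⟩, ?_, ?_⟩
  · -- majorization transfer
    intro v hmaj S
    refine ⟨Finset.univ.filter (fun k : Fin n => (k : ℕ) < S.card), ?_, ?_⟩
    · have h : (Finset.univ.filter (fun k : Fin n => (k : ℕ) < S.card)).card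
          ≤ (Finset.range S.card).card := by
        apply Finset.card_le_card_of_injOn (fun k : Fin n => (k : ℕ))
        · intro k hk
          simp only [Finset.mem_coe, Finset.mem_filter, Finset.mem_univ, true_and] at hk
          exact Finset.mem_range.mpr hk
        · intro a _ b _ hab
          exact Fin.ext hab
      simpa using h
    · obtain ⟨T'', hT''card, hT''⟩ := hmaj (S ×ˢ Finset.univ)
      have hcard : (S ×ˢ (Finset.univ : Finset (Fin m))).card = S.card * m := by
        simp [Finset.card_product]
      have hS : ∑ z ∈ S ×ˢ Finset.univ, v z.1 * s z.2 = ∑ k ∈ S, v k := by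
        rw [Finset.sum_product]
        refine Finset.sum_congr rfl fun k _ => ?_
        have hy : ∀ y : Fin m, v (k, y).1 * s (k, y).2 = v k * s y := fun y => rfl
        rw [Finset.sum_congr rfl fun y _ => hy y, ← Finset.mul_sum, hs1, mul_one]
      have hTp : ∑ z ∈ T'', p z = ∑ i ∈ T''.image (fun z => π.symm (E z)), D i := by
        rw [Finset.sum_image (fun z _ z' _ h => E.injective (π.symm.injective h))]
        exact Finset.sum_congr rfl fun z _ => hpz z
      have himgcard : (T''.image (fun z => π.symm (E z))).card ≤ S.card * m :=
        le_trans Finset.card_image_le (by rw [← hcard]; exact hT''card)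
      have htop := aux_sum_le_topsum D hDanti hD0 (T''.image (fun z => π.symm (E z)))
        (S.card * m) himgcard
      rw [hblock S.card]
      calc ∑ k ∈ S, v k = ∑ z ∈ S ×ˢ Finset.univ, v z.1 * s z.2 := hS.symm
        _ ≤ ∑ z ∈ T'', p z := hT''
        _ = ∑ i ∈ T''.image (fun z => π.symm (E z)), D i := hTp
        _ ≤ _ := htop
  · -- entropy bound
    have hb : ∀ k : Fin n, -∑ j : Fin m, D (E (k, j)) * Real.log (D (E (k, j)))
        ≤ -(q k * Real.log (q k)) + q k * Real.log m :=
      fun k => aux_block m hm (fun j => D (E (k, j))) (fun j => hD0 _)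
    have hsum1 : ∑ i : Fin (n*m), D i * Real.log (D i)
        = ∑ z : Fin n × Fin m, p z * Real.log (p z) := by
      rw [← Equiv.sum_comp (E.trans π.symm) (fun i => D i * Real.log (D i))]
      refine Finset.sum_congr rfl fun z _ => ?_
      simp only [Equiv.trans_apply]
      rw [← hpz z]
    have hsum2 : ∑ i : Fin (n*m), D i * Real.log (D i)
        = ∑ k, ∑ j, D (E (k, j)) * Real.log (D (E (k, j))) := by
      rw [← Equiv.sum_comp E (fun i => D i * Real.log (D i)), Fintype.sum_prod_type]
    have hmain : -∑ z : Fin n × Fin m, p z * Real.log (p z)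
        ≤ Real.log m + -∑ k, q k * Real.log (q k) := by
      rw [← hsum1, hsum2]
      calc -∑ k, ∑ j, D (E (k, j)) * Real.log (D (E (k, j)))
          = ∑ k, -∑ j, D (E (k, j)) * Real.log (D (E (k, j))) := by
            rw [← Finset.sum_neg_distrib]
        _ ≤ ∑ k, (-(q k * Real.log (q k)) + q k * Real.log m) :=
            Finset.sum_le_sum fun k _ => hb k
        _ = -∑ k, q k * Real.log (q k) + (∑ k, q k) * Real.log m := by
            rw [Finset.sum_add_distrib, Finset.sum_neg_distrib, ← Finset.sum_mul]
        _ = Real.log m + -∑ k, q k * Real.log (q k) := by rw [hqsum]; ring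
    have hL2 : (0:ℝ) < Real.log 2 := Real.log_pos one_lt_two
    rw [entropy_eq, entropy_eq, ← Real.log_div_log, ← add_div]
    exact div_le_div_of_nonneg_right hmain hL2.le

/-- The maximal entropy of a distribution majorizing every `r_x ⊗ s` is at most
`log₂ m` plus the maximal entropy of a distribution majorizing every `r_x`. -/
theorem stmt7
    (a n m : ℕ) (r : Fin a → Fin n → ℝ) (s : Fin m → ℝ)
    (hr : ∀ x, IsProbVec (r x)) (hs : IsProbVec s) :
    sSup {h : ℝ | ∃ p : Fin n × Fin m → ℝ, IsProbVec p ∧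
        (∀ x, Majorizes p (fun j : Fin n × Fin m => r x j.1 * s j.2)) ∧
        h = entropy p} ≤
      Real.logb 2 m +
        sSup {h : ℝ | ∃ q : Fin n → ℝ, IsProbVec q ∧
          (∀ x, Majorizes q (r x)) ∧ h = entropy q} := by
  have hm : 0 < m := by
    rcases Nat.eq_zero_or_pos m with h | h
    · exfalso; subst h; simpa using hs.2
    · exact h
  have hlogm : 0 ≤ Real.logb 2 m :=
    Real.logb_nonneg one_lt_two (by exact_mod_cast hm)
  set B := {h : ℝ | ∃ q : Fin n → ℝ, IsProbVec q ∧
    (∀ x, Majorizes q (r x)) ∧ h = entropy q} with hBdef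
  have hsSupB : 0 ≤ sSup B := by
    rcases Set.eq_empty_or_nonempty B with hB | hB
    · rw [hB, Real.sSup_empty]
    · obtain ⟨b, hb⟩ := hB
      obtain ⟨qb, hqb, _, rfl⟩ := hb
      have hn : 0 < n := by
        rcases Nat.eq_zero_or_pos n with h | h
        · exfalso; subst h; simpa using hqb.2
        · exact h
      have hbdd : BddAbove B := by
        refine ⟨Real.logb 2 n, ?_⟩
        rintro x ⟨qx, hqx, _, rfl⟩
        exact entropy_le hn qx hqx
      exact le_trans (entropy_nonneg qb hqb) (le_csSup hbdd ⟨qb, hqb, by tauto⟩)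
  apply Real.sSup_le ?_ (by linarith)
  rintro h ⟨p, hp, hmaj, rfl⟩
  have hn : 0 < n := by
    rcases Nat.eq_zero_or_pos n with h | h
    · exfalso; subst h
      have := hp.2
      simp [Fintype.sum_prod_type] at this
    · exact h
  obtain ⟨q, hq, htr, hent⟩ := aux_exists_q hm p hp s hs.2
  have hqB : entropy q ∈ B := ⟨q, hq, fun x => htr (r x) (hmaj x), rfl⟩
  have hbdd : BddAbove B := by
    refine ⟨Real.logb 2 n, ?_⟩
    rintro x ⟨qx, hqx, _, rfl⟩
    exact entropy_le hn qx hqx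
  calc entropy p ≤ Real.logb 2 m + entropy q := hent
    _ ≤ Real.logb 2 m + sSup B := by
        exact add_le_add le_rfl (le_csSup hbdd hqB)
end

section
/- Let C be an R-divergence (monotone under superchannels that keep both arguments in the restricted class R of channels), and define its minimal extension C_min(M||N) := sup over superchannels Θ with Θ[M], Θ[N] ∈ R of C(Θ[M]||Θ[N]), and maximal extension C_max(M||N) := inf of C(E||F) over E, F ∈ R for which some superchannel Θ satisfies Θ[E] = M, Θ[F] = N. Then: (a) both C_min and C_max satisfy the data processing inequality under all superchannels; (b) both reduce to C on pairs in R; (c) any channel divergence D reducing to C on R satisfies C_min(M||N) ≤ D(M||N) ≤ C_max(M||N) for all channels M, N. -/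
open scoped BigOperators ComplexOrder Matrix

abbrev Mat (ι : Type) := Matrix ι ι ℂ
abbrev QMap (ι κ : Type) := Mat ι →ₗ[ℂ] Mat κ

noncomputable def choi {ι κ : Type} [Fintype ι] [DecidableEq ι] (N : QMap ι κ) :
    Matrix (ι × κ) (ι × κ) ℂ :=
  Matrix.of fun p q => N (Matrix.single p.1 q.1 1) p.2 q.2

def IsCP {ι κ : Type} [Fintype ι] [DecidableEq ι] [Fintype κ] (N : QMap ι κ) : Prop :=
  (choi N).PosSemidef

def IsTP {ι κ : Type} [Fintype ι] [Fintype κ] (N : QMap ι κ) : Prop :=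
  ∀ ρ : Mat ι, (N ρ).trace = ρ.trace

def IsCPTP {ι κ : Type} [Fintype ι] [DecidableEq ι] [Fintype κ] (N : QMap ι κ) : Prop :=
  IsCP N ∧ IsTP N

noncomputable def tensMap {ι1 κ1 ι2 κ2 : Type} [Fintype ι1] [DecidableEq ι1]
    [Fintype ι2] [DecidableEq ι2]
    (M : QMap ι1 κ1) (N : QMap ι2 κ2) : QMap (ι1 × ι2) (κ1 × κ2) where
  toFun X := Matrix.of fun p q =>
    ∑ i : ι1, ∑ i' : ι1, ∑ j : ι2, ∑ j' : ι2,
      X (i, j) (i', j') *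
        (M (Matrix.single i i' 1) p.1 q.1 * N (Matrix.single j j' 1) p.2 q.2)
  map_add' X Y := by
    ext p q
    simp [Matrix.add_apply, add_mul, Finset.sum_add_distrib]
  map_smul' c X := by
    ext p q
    simp [Matrix.smul_apply, Finset.mul_sum, smul_eq_mul, mul_assoc]

noncomputable def reindexQ {ι κ : Type} {m k : ℕ} (e : ι ≃ Fin m) (f : κ ≃ Fin k)
    (N : QMap ι κ) : QMap (Fin m) (Fin k) where
  toFun X := (N (X.submatrix e e)).submatrix f.symm f.symm
  map_add' X Y := by
    simp [Matrix.submatrix_add, map_add]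
  map_smul' c X := by
    simp [Matrix.submatrix_smul, map_smul]

noncomputable def tensChan {a1 b1 a2 b2 : ℕ}
    (M : QMap (Fin a1) (Fin b1)) (N : QMap (Fin a2) (Fin b2)) :
    QMap (Fin (a1 * a2)) (Fin (b1 * b2)) :=
  reindexQ finProdFinEquiv finProdFinEquiv (tensMap M N)

noncomputable def superApply {a b a' b' r : ℕ}
    (E : QMap (Fin a') (Fin a × Fin r)) (F : QMap (Fin b × Fin r) (Fin b'))
    (N : QMap (Fin a) (Fin b)) : QMap (Fin a') (Fin b') :=
  F ∘ₗ tensMap N (LinearMap.id : QMap (Fin r) (Fin r)) ∘ₗ E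

noncomputable def replacement {ι κ : Type} [Fintype ι] (σ : Mat κ) : QMap ι κ where
  toFun ω := ω.trace • σ
  map_add' x y := by simp [Matrix.trace_add, add_smul]
  map_smul' c x := by simp [Matrix.trace_smul, smul_smul]

def IsDensity {κ : Type} [Fintype κ] (σ : Mat κ) : Prop :=
  σ.PosSemidef ∧ σ.trace = 1

section Stage1

open Matrix
open scoped Kronecker

variable {ι κ ι1 κ1 ι2 κ2 : Type}

noncomputable def relabelL (e : ι ≃ κ) : QMap ι κ where
  toFun X := X.submatrix e.symm e.symm
  map_add' X Y := by ext p q; simp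
  map_smul' c X := by ext p q; simp

lemma stdBasis_decomp [DecidableEq ι] [DecidableEq κ] (i : ι) (j : κ) (c : ℂ) :
    Matrix.single i j c = c • Matrix.single i j 1 := by
  rw [Matrix.smul_single, smul_eq_mul, mul_one]

lemma lin_ext [Fintype ι] [DecidableEq ι] {M : Type} [AddCommMonoid M] [Module ℂ M]
    {f g : Mat ι →ₗ[ℂ] M}
    (h : ∀ i j, f (Matrix.single i j 1) = g (Matrix.single i j 1)) : f = g := by
  ext X
  conv_lhs => rw [Matrix.matrix_eq_sum_single X]
  conv_rhs => rw [Matrix.matrix_eq_sum_single X]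
  simp only [map_sum]
  refine Finset.sum_congr rfl fun i _ => Finset.sum_congr rfl fun j _ => ?_
  rw [stdBasis_decomp, _root_.map_smul, _root_.map_smul, h]

lemma qmap_apply_expand [Fintype ι] [DecidableEq ι] (N : QMap ι κ) (X : Mat ι) (p q : κ) :
    N X p q = ∑ i, ∑ j, X i j * N (Matrix.single i j 1) p q := by
  conv_lhs => rw [Matrix.matrix_eq_sum_single X]
  rw [map_sum, Matrix.sum_apply]
  refine Finset.sum_congr rfl fun i _ => ?_
  rw [map_sum, Matrix.sum_apply]
  refine Finset.sum_congr rfl fun j _ => ?_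
  rw [stdBasis_decomp, _root_.map_smul]
  simp

lemma stdBasis_kron [DecidableEq ι1] [DecidableEq ι2] (i i' : ι1) (j j' : ι2) :
    Matrix.single (i, j) (i', j') (1 : ℂ)
      = Matrix.single i i' 1 ⊗ₖ Matrix.single j j' 1 := by
  ext ⟨a, b⟩ ⟨c, d⟩
  simp [Matrix.single, Prod.ext_iff, ite_and]
  aesop

lemma tensMap_kron [Fintype ι1] [DecidableEq ι1] [Fintype ι2] [DecidableEq ι2]
    (M : QMap ι1 κ1) (N : QMap ι2 κ2) (A : Mat ι1) (B : Mat ι2) :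
    tensMap M N (A ⊗ₖ B) = (M A) ⊗ₖ (N B) := by
  ext ⟨p1, p2⟩ ⟨q1, q2⟩
  show (∑ i, ∑ i', ∑ j, ∑ j', (A ⊗ₖ B) (i, j) (i', j') *
      (M (Matrix.single i i' 1) p1 q1 * N (Matrix.single j j' 1) p2 q2)) = _
  conv_rhs => rw [Matrix.kroneckerMap_apply]
  rw [qmap_apply_expand M A p1 q1, qmap_apply_expand N B p2 q2]
  conv_rhs => rw [Finset.sum_mul]
  refine Finset.sum_congr rfl fun i _ => ?_
  conv_rhs => rw [Finset.sum_mul]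
  refine Finset.sum_congr rfl fun i' _ => ?_
  conv_rhs => rw [Finset.mul_sum]
  refine Finset.sum_congr rfl fun j _ => ?_
  conv_rhs => rw [Finset.mul_sum]
  refine Finset.sum_congr rfl fun j' _ => ?_
  simp only [Matrix.kroneckerMap_apply]
  ring

end Stage1
section Stage2
open Matrix
open scoped Kronecker

variable {ι κ ι1 κ1 ι2 κ2 : Type}

lemma kron_sum_sum {T S m n m' n' : Type} (s : Finset T) (t : Finset S)
    (A : T → Matrix m n ℂ) (B : S → Matrix m' n' ℂ) :
    (∑ k ∈ s, A k) ⊗ₖ (∑ l ∈ t, B l) = ∑ p ∈ s ×ˢ t, A p.1 ⊗ₖ B p.2 := by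
  ext ⟨a, b⟩ ⟨c, d⟩
  simp only [Matrix.kroneckerMap_apply, Matrix.sum_apply, Finset.sum_product]
  rw [Finset.sum_mul_sum]

lemma relabelL_apply (e : ι ≃ κ) (X : Mat ι) :
    relabelL e X = X.submatrix e.symm e.symm := rfl

lemma relabelL_trans_apply {μ : Type} (e : ι ≃ κ) (f : κ ≃ μ) (X : Mat ι) :
    relabelL (e.trans f) X = relabelL f (relabelL e X) := by
  ext p q; rfl

lemma relabelL_symm_apply (e : ι ≃ κ) (X : Mat ι) :
    relabelL e.symm (relabelL e X) = X := by
  ext p q; simp [relabelL_apply, Matrix.submatrix_apply]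

lemma relabelL_prodCongr_refl {α β γ : Type} (f : β ≃ γ) (A : Mat α) (B : Mat β) :
    relabelL ((Equiv.refl α).prodCongr f) (A ⊗ₖ B) = A ⊗ₖ relabelL f B := by
  ext ⟨p1, p2⟩ ⟨q1, q2⟩; rfl

lemma relabelL_prodAssoc {α β γ : Type} (A : Mat α) (B : Mat β) (C : Mat γ) :
    relabelL (Equiv.prodAssoc α β γ) ((A ⊗ₖ B) ⊗ₖ C) = A ⊗ₖ (B ⊗ₖ C) := by
  ext ⟨a, b, c⟩ ⟨a', b', c'⟩
  simp [relabelL_apply, Equiv.prodAssoc, mul_assoc]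

lemma tensMap_comp {ι1 κ1 μ1 ι2 κ2 μ2 : Type} [Fintype ι1] [DecidableEq ι1]
    [Fintype ι2] [DecidableEq ι2] [Fintype κ1] [DecidableEq κ1] [Fintype κ2] [DecidableEq κ2]
    (M2 : QMap κ1 μ1) (M1 : QMap ι1 κ1) (N2 : QMap κ2 μ2) (N1 : QMap ι2 κ2) :
    tensMap (M2 ∘ₗ M1) (N2 ∘ₗ N1) = tensMap M2 N2 ∘ₗ tensMap M1 N1 := by
  apply lin_ext
  rintro ⟨i, j⟩ ⟨i', j'⟩
  simp only [LinearMap.comp_apply, stdBasis_kron, tensMap_kron]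

def gA (n r r' : ℕ) : (Fin n × Fin r) × Fin r' ≃ Fin n × Fin (r * r') :=
  (Equiv.prodAssoc _ _ _).trans ((Equiv.refl (Fin n)).prodCongr finProdFinEquiv)

lemma tens_id_relabel {a b : ℕ} (r r' : ℕ) (N : QMap (Fin a) (Fin b)) :
    tensMap N (LinearMap.id : QMap (Fin (r * r')) (Fin (r * r'))) ∘ₗ relabelL (gA a r r')
      = relabelL (gA b r r') ∘ₗ
        tensMap (tensMap N (LinearMap.id : QMap (Fin r) (Fin r)))
          (LinearMap.id : QMap (Fin r') (Fin r')) := by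
  apply lin_ext
  rintro ⟨⟨i, u⟩, v⟩ ⟨⟨i', u'⟩, v'⟩
  simp only [LinearMap.comp_apply, stdBasis_kron, gA, relabelL_trans_apply,
    relabelL_prodAssoc, relabelL_prodCongr_refl, tensMap_kron, LinearMap.id_apply,
    relabelL_trans_apply]

end Stage2
section Stage3
open Matrix
open scoped Kronecker

variable {ι κ ι1 κ1 ι2 κ2 : Type}

lemma kron_conjTranspose {m n m' n' : Type} (A : Matrix m n ℂ) (B : Matrix m' n' ℂ) :
    (A ⊗ₖ B)ᴴ = Aᴴ ⊗ₖ Bᴴ := by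
  ext ⟨a, b⟩ ⟨c, d⟩
  simp [Matrix.conjTranspose_apply, mul_comm]

noncomputable def sandwich [Fintype ι] {T : Type} (s : Finset T) (K : T → Matrix κ ι ℂ) :
    QMap ι κ where
  toFun X := ∑ k ∈ s, K k * X * (K k)ᴴ
  map_add' X Y := by
    simp [Matrix.mul_add, Matrix.add_mul, Finset.sum_add_distrib]
  map_smul' c X := by
    simp [Finset.smul_sum, Matrix.mul_smul, Matrix.smul_mul]

lemma sandwich_apply [Fintype ι] {T : Type} (s : Finset T) (K : T → Matrix κ ι ℂ) (X : Mat ι) :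
    sandwich s K X = ∑ k ∈ s, K k * X * (K k)ᴴ := rfl

def KrausForm [Fintype ι] (N : QMap ι κ) : Prop :=
  ∃ (T : Type) (s : Finset T) (K : T → Matrix κ ι ℂ), N = sandwich s K

lemma krausForm_id [Fintype ι] [DecidableEq ι] : KrausForm (LinearMap.id : QMap ι ι) := by
  refine ⟨Unit, {()}, fun _ => (1 : Mat ι), ?_⟩
  ext X : 1
  simp [sandwich_apply]

lemma krausForm_comp {μ : Type} [Fintype ι] [Fintype κ] {F : QMap κ μ} {G : QMap ι κ}
    (hF : KrausForm F) (hG : KrausForm G) : KrausForm (F ∘ₗ G) := by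
  obtain ⟨T, s, K, rfl⟩ := hF
  obtain ⟨S, t, L, rfl⟩ := hG
  refine ⟨T × S, s ×ˢ t, fun p => K p.1 * L p.2, ?_⟩
  ext X : 1
  simp only [LinearMap.comp_apply, sandwich_apply, Finset.sum_product]
  refine Finset.sum_congr rfl fun k _ => ?_
  rw [Matrix.mul_sum, Matrix.sum_mul]
  refine Finset.sum_congr rfl fun l _ => ?_
  simp only [Matrix.conjTranspose_mul, Matrix.mul_assoc]

lemma krausForm_relabelL [Fintype ι] [Fintype κ] [DecidableEq ι] [DecidableEq κ] (e : ι ≃ κ) :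
    KrausForm (relabelL e : QMap ι κ) := by
  classical
  set P : Matrix κ ι ℂ := Matrix.of (fun p i => if e i = p then (1 : ℂ) else 0) with hP
  have key : ∀ X : Mat ι, P * X * Pᴴ = X.submatrix e.symm e.symm := by
    intro X
    ext p q
    rw [Matrix.mul_apply]
    have h1 : ∀ j, (P * X) p j = X (e.symm p) j := by
      intro j
      rw [Matrix.mul_apply, Finset.sum_eq_single (e.symm p)]
      · simp [hP]
      · intro x _ hx
        simp only [hP, Matrix.of_apply, ite_mul, one_mul, zero_mul, ite_eq_right_iff]
        intro hex
        exact absurd ((Equiv.symm_apply_eq e).mpr hex.symm) (Ne.symm hx)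
      · simp
    simp only [h1, Matrix.conjTranspose_apply, hP, Matrix.of_apply, Matrix.submatrix_apply]
    rw [Finset.sum_eq_single (e.symm q)]
    · simp [← hP, h1]
    · intro x _ hx
      have hex : e x ≠ q := fun hex => hx (by rw [← hex, Equiv.symm_apply_apply])
      simp [hex]
    · simp
  refine ⟨Unit, {()}, fun _ => P, ?_⟩
  ext X : 1
  simp [sandwich_apply, key, relabelL_apply]

lemma krausForm_tensMap [Fintype ι1] [DecidableEq ι1] [Fintype ι2] [DecidableEq ι2]
    {M : QMap ι1 κ1} {N : QMap ι2 κ2} (hM : KrausForm M) (hN : KrausForm N) :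
    KrausForm (tensMap M N) := by
  obtain ⟨T, s, K, rfl⟩ := hM
  obtain ⟨S, t, L, rfl⟩ := hN
  refine ⟨T × S, s ×ˢ t, fun p => K p.1 ⊗ₖ L p.2, ?_⟩
  apply lin_ext
  rintro ⟨i, j⟩ ⟨i', j'⟩
  rw [stdBasis_kron, tensMap_kron, sandwich_apply, sandwich_apply, kron_sum_sum,
    sandwich_apply]
  refine Finset.sum_congr rfl fun p _ => ?_
  rw [kron_conjTranspose, ← Matrix.mul_kronecker_mul, ← Matrix.mul_kronecker_mul]

end Stage3
section Stage4
open Matrix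
open scoped Kronecker

variable {ι κ ι1 κ1 ι2 κ2 : Type}

lemma sandwich_stdBasis_entry [Fintype ι] [DecidableEq ι] (K : Matrix κ ι ℂ)
    (i j : ι) (p q : κ) :
    (K * Matrix.single i j (1 : ℂ) * Kᴴ) p q = K p i * starRingEnd ℂ (K q j) := by
  have h1 : ∀ t, (K * Matrix.single i j (1 : ℂ)) p t
      = if j = t then K p i else 0 := by
    intro t
    rw [Matrix.mul_apply, Finset.sum_eq_single i]
    · by_cases h : j = t <;> simp [h]
    · intro x _ hx
      simp [Ne.symm hx]
    · simp
  rw [Matrix.mul_apply]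
  rw [Finset.sum_eq_single j]
  · simp [h1, Matrix.conjTranspose_apply]
  · intro t _ ht; simp [h1, Ne.symm ht]
  · simp

lemma isCP_sandwich [Fintype ι] [DecidableEq ι] [Fintype κ] {T : Type} (s : Finset T)
    (K : T → Matrix κ ι ℂ) : IsCP (sandwich s K) := by
  classical
  have hchoi : choi (sandwich s K)
      = ∑ k ∈ s, (Matrix.of fun (_ : Unit) (p : ι × κ) => starRingEnd ℂ (K k p.2 p.1))ᴴ
          * (Matrix.of fun (_ : Unit) (p : ι × κ) => starRingEnd ℂ (K k p.2 p.1)) := by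
    ext ⟨i, p2⟩ ⟨j, q2⟩
    simp only [choi, Matrix.of_apply, sandwich_apply, Matrix.sum_apply]
    refine Finset.sum_congr rfl fun k _ => ?_
    rw [sandwich_stdBasis_entry, Matrix.mul_apply]
    simp [Matrix.conjTranspose_apply]
  rw [IsCP, hchoi]
  refine Finset.sum_induction _ _ (fun a b ha hb => ha.add hb) Matrix.PosSemidef.zero
    fun k _ => Matrix.posSemidef_conjTranspose_mul_self _

lemma krausForm_of_isCP [Fintype ι] [DecidableEq ι] [Fintype κ] [DecidableEq κ]
    {N : QMap ι κ} (h : IsCP N) : KrausForm N := by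
  obtain ⟨B, hB⟩ : ∃ B : Matrix (ι × κ) (ι × κ) ℂ, choi N = Bᴴ * B := by
    open scoped MatrixOrder in
    exact CStarAlgebra.nonneg_iff_eq_star_mul_self.mp (Matrix.PosSemidef.nonneg h)
  refine ⟨ι × κ, Finset.univ, fun u => Matrix.of fun p i => starRingEnd ℂ (B u (i, p)), ?_⟩
  apply lin_ext
  intro i j
  ext p q
  rw [sandwich_apply, Matrix.sum_apply]
  have : N (Matrix.single i j 1) p q = choi N ((i, p)) ((j, q)) := rfl
  rw [this, hB, Matrix.mul_apply]
  refine Finset.sum_congr rfl fun u _ => ?_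
  rw [sandwich_stdBasis_entry]
  simp [Matrix.conjTranspose_apply, mul_comm]

lemma isCP_of_krausForm [Fintype ι] [DecidableEq ι] [Fintype κ] {N : QMap ι κ}
    (h : KrausForm N) : IsCP N := by
  obtain ⟨T, s, K, rfl⟩ := h
  exact isCP_sandwich s K

lemma isTP_relabelL [Fintype ι] [Fintype κ] (e : ι ≃ κ) : IsTP (relabelL e : QMap ι κ) := by
  intro ρ
  simpa [relabelL_apply, Matrix.trace, Matrix.diag] using
    Equiv.sum_comp e.symm (fun i => ρ i i)

lemma isTP_id [Fintype ι] : IsTP (LinearMap.id : QMap ι ι) := fun _ => rfl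

lemma isTP_comp {μ : Type} [Fintype ι] [Fintype κ] [Fintype μ] {F : QMap κ μ} {G : QMap ι κ}
    (hF : IsTP F) (hG : IsTP G) : IsTP (F ∘ₗ G) := fun ρ => by
  rw [LinearMap.comp_apply, hF, hG]

lemma isTP_tensMap [Fintype ι1] [DecidableEq ι1] [Fintype ι2] [DecidableEq ι2]
    [Fintype κ1] [Fintype κ2] {M : QMap ι1 κ1} {N : QMap ι2 κ2}
    (hM : IsTP M) (hN : IsTP N) : IsTP (tensMap M N) := by
  have key : (Matrix.traceLinearMap (κ1 × κ2) ℂ ℂ) ∘ₗ tensMap M N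
      = Matrix.traceLinearMap (ι1 × ι2) ℂ ℂ := by
    apply lin_ext
    rintro ⟨i, j⟩ ⟨i', j'⟩
    simp only [LinearMap.comp_apply, stdBasis_kron, tensMap_kron, Matrix.traceLinearMap_apply,
      Matrix.trace_kronecker]
    rw [hM, hN]
  intro ρ
  exact LinearMap.congr_fun key ρ

lemma isCPTP_comp {μ : Type} [Fintype ι] [DecidableEq ι] [Fintype κ] [DecidableEq κ]
    [Fintype μ] [DecidableEq μ] {F : QMap κ μ} {G : QMap ι κ} (hF : IsCPTP F) (hG : IsCPTP G) :
    IsCPTP (F ∘ₗ G) :=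
  ⟨isCP_of_krausForm (krausForm_comp (krausForm_of_isCP hF.1) (krausForm_of_isCP hG.1)),
   isTP_comp hF.2 hG.2⟩

lemma isCPTP_relabelL [Fintype ι] [DecidableEq ι] [Fintype κ] [DecidableEq κ] (e : ι ≃ κ) :
    IsCPTP (relabelL e : QMap ι κ) :=
  ⟨isCP_of_krausForm (krausForm_relabelL e), isTP_relabelL e⟩

lemma isCPTP_id [Fintype ι] [DecidableEq ι] : IsCPTP (LinearMap.id : QMap ι ι) :=
  ⟨isCP_of_krausForm krausForm_id, isTP_id⟩

lemma isCPTP_tensMap [Fintype ι1] [DecidableEq ι1] [Fintype ι2] [DecidableEq ι2]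
    [Fintype κ1] [DecidableEq κ1] [Fintype κ2] [DecidableEq κ2]
    {M : QMap ι1 κ1} {N : QMap ι2 κ2} (hM : IsCPTP M) (hN : IsCPTP N) :
    IsCPTP (tensMap M N) :=
  ⟨isCP_of_krausForm (krausForm_tensMap (krausForm_of_isCP hM.1) (krausForm_of_isCP hN.1)),
   isTP_tensMap hM.2 hN.2⟩

end Stage4
section Stage5
open Matrix
open scoped Kronecker

noncomputable def Ecomp {a a' r a'' r' : ℕ}
    (E : QMap (Fin a') (Fin a × Fin r)) (E' : QMap (Fin a'') (Fin a' × Fin r')) :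
    QMap (Fin a'') (Fin a × Fin (r * r')) :=
  relabelL (gA a r r') ∘ₗ tensMap E (LinearMap.id : QMap (Fin r') (Fin r')) ∘ₗ E'

noncomputable def Fcomp {b b' r b'' r' : ℕ}
    (F : QMap (Fin b × Fin r) (Fin b')) (F' : QMap (Fin b' × Fin r') (Fin b'')) :
    QMap (Fin b × Fin (r * r')) (Fin b'') :=
  F' ∘ₗ tensMap F (LinearMap.id : QMap (Fin r') (Fin r')) ∘ₗ relabelL (gA b r r').symm

lemma isCPTP_Ecomp {a a' r a'' r' : ℕ}
    {E : QMap (Fin a') (Fin a × Fin r)} {E' : QMap (Fin a'') (Fin a' × Fin r')}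
    (hE : IsCPTP E) (hE' : IsCPTP E') : IsCPTP (Ecomp E E') :=
  isCPTP_comp (isCPTP_relabelL _) (isCPTP_comp (isCPTP_tensMap hE isCPTP_id) hE')

lemma isCPTP_Fcomp {b b' r b'' r' : ℕ}
    {F : QMap (Fin b × Fin r) (Fin b')} {F' : QMap (Fin b' × Fin r') (Fin b'')}
    (hF : IsCPTP F) (hF' : IsCPTP F') : IsCPTP (Fcomp F F') :=
  isCPTP_comp hF' (isCPTP_comp (isCPTP_tensMap hF isCPTP_id) (isCPTP_relabelL _))

lemma superApply_comp {a b a' b' r a'' b'' r' : ℕ}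
    (E : QMap (Fin a') (Fin a × Fin r)) (F : QMap (Fin b × Fin r) (Fin b'))
    (E' : QMap (Fin a'') (Fin a' × Fin r')) (F' : QMap (Fin b' × Fin r') (Fin b''))
    (N : QMap (Fin a) (Fin b)) :
    superApply (Ecomp E E') (Fcomp F F') N = superApply E' F' (superApply E F N) := by
  have h1 := tensMap_comp (tensMap N LinearMap.id) E
      (LinearMap.id : QMap (Fin r') (Fin r')) (LinearMap.id : QMap (Fin r') (Fin r'))
  have h2 := tensMap_comp F (tensMap N LinearMap.id ∘ₗ E)
      (LinearMap.id : QMap (Fin r') (Fin r'))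
      ((LinearMap.id : QMap (Fin r') (Fin r')) ∘ₗ (LinearMap.id : QMap (Fin r') (Fin r')))
  simp only [LinearMap.id_comp] at h1 h2
  rw [h1] at h2
  ext X : 1
  simp only [superApply, Ecomp, Fcomp, LinearMap.comp_apply]
  have hmid := LinearMap.congr_fun (tens_id_relabel r r' N)
      (tensMap E (LinearMap.id : QMap (Fin r') (Fin r')) (E' X))
  simp only [LinearMap.comp_apply] at hmid
  rw [hmid, relabelL_symm_apply, h2]
  simp only [LinearMap.comp_apply]

noncomputable def idE (a : ℕ) : QMap (Fin a) (Fin a × Fin 1) :=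
  relabelL (Equiv.prodUnique (Fin a) (Fin 1)).symm

noncomputable def idF (b : ℕ) : QMap (Fin b × Fin 1) (Fin b) :=
  relabelL (Equiv.prodUnique (Fin b) (Fin 1))

lemma isCPTP_idE (a : ℕ) : IsCPTP (idE a) := isCPTP_relabelL _
lemma isCPTP_idF (b : ℕ) : IsCPTP (idF b) := isCPTP_relabelL _

lemma superApply_idEF {a b : ℕ} (M : QMap (Fin a) (Fin b)) :
    superApply (idE a) (idF b) M = M := by
  apply lin_ext
  intro i j
  simp only [superApply, LinearMap.comp_apply, idE, idF]
  have h1 : relabelL (Equiv.prodUnique (Fin a) (Fin 1)).symm (Matrix.single i j (1 : ℂ))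
      = Matrix.single i j (1 : ℂ) ⊗ₖ Matrix.single (0 : Fin 1) 0 (1 : ℂ) := by
    ext ⟨p1, p2⟩ ⟨q1, q2⟩
    simp [relabelL_apply, Matrix.submatrix_apply, Equiv.prodUnique, Matrix.kroneckerMap_apply,
      Subsingleton.elim p2 0, Subsingleton.elim q2 0]
  rw [h1, tensMap_kron]
  have h2 : ∀ A : Mat (Fin b),
      relabelL (Equiv.prodUnique (Fin b) (Fin 1))
        (A ⊗ₖ Matrix.single (0 : Fin 1) 0 (1 : ℂ)) = A := by
    intro A
    ext p q
    simp [relabelL_apply, Matrix.submatrix_apply, Equiv.prodUnique, Matrix.kroneckerMap_apply,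
      Subsingleton.elim ((Equiv.equivPUnit (Fin 1)).symm PUnit.unit) (0 : Fin 1)]
  simp only [LinearMap.id_apply]
  exact h2 _

end Stage5


/-- The minimal channel extension of an `R`-divergence `C`. -/
noncomputable def Cmin (R : ∀ a b : ℕ, QMap (Fin a) (Fin b) → Prop)
    (C : ∀ a b : ℕ, QMap (Fin a) (Fin b) → QMap (Fin a) (Fin b) → EReal)
    (a b : ℕ) (M N : QMap (Fin a) (Fin b)) : EReal :=
  sSup {v : EReal | ∃ (a' b' r : ℕ) (E : QMap (Fin a') (Fin a × Fin r))
      (F : QMap (Fin b × Fin r) (Fin b')),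
    IsCPTP E ∧ IsCPTP F ∧ R a' b' (superApply E F M) ∧ R a' b' (superApply E F N) ∧
    v = C a' b' (superApply E F M) (superApply E F N)}

/-- The maximal channel extension of an `R`-divergence `C`. -/
noncomputable def Cmax (R : ∀ a b : ℕ, QMap (Fin a) (Fin b) → Prop)
    (C : ∀ a b : ℕ, QMap (Fin a) (Fin b) → QMap (Fin a) (Fin b) → EReal)
    (a b : ℕ) (M N : QMap (Fin a) (Fin b)) : EReal :=
  sInf {v : EReal | ∃ (a' b' r : ℕ) (Ech Fch : QMap (Fin a') (Fin b'))
      (E : QMap (Fin a) (Fin a' × Fin r)) (F : QMap (Fin b' × Fin r) (Fin b)),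
    R a' b' Ech ∧ R a' b' Fch ∧ IsCPTP E ∧ IsCPTP F ∧
    superApply E F Ech = M ∧ superApply E F Fch = N ∧ v = C a' b' Ech Fch}

/-- Properties of the optimal extensions of an `R`-divergence:
(a) data processing, (b) reduction to `C` on `R`, (c) optimality. -/
theorem stmt17
    (R : ∀ a b : ℕ, QMap (Fin a) (Fin b) → Prop)
    (hR : ∀ a b N, R a b N → IsCPTP N)
    (C : ∀ a b : ℕ, QMap (Fin a) (Fin b) → QMap (Fin a) (Fin b) → EReal)
    (hCpos : ∀ a b M N, R a b M → R a b N → 0 ≤ C a b M N)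
    (hCmono : ∀ (a b a' b' r : ℕ) (M N : QMap (Fin a) (Fin b))
        (E : QMap (Fin a') (Fin a × Fin r)) (F : QMap (Fin b × Fin r) (Fin b')),
      R a b M → R a b N → IsCPTP E → IsCPTP F →
      R a' b' (superApply E F M) → R a' b' (superApply E F N) →
      C a' b' (superApply E F M) (superApply E F N) ≤ C a b M N) :
    (∀ (a b a' b' r : ℕ) (M N : QMap (Fin a) (Fin b))
        (E : QMap (Fin a') (Fin a × Fin r)) (F : QMap (Fin b × Fin r) (Fin b')),
      IsCPTP M → IsCPTP N → IsCPTP E → IsCPTP F →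
      Cmin R C a' b' (superApply E F M) (superApply E F N) ≤ Cmin R C a b M N ∧
      Cmax R C a' b' (superApply E F M) (superApply E F N) ≤ Cmax R C a b M N) ∧
    (∀ (a b : ℕ) (M N : QMap (Fin a) (Fin b)), R a b M → R a b N →
      Cmin R C a b M N = C a b M N ∧ Cmax R C a b M N = C a b M N) ∧
    (∀ D : ∀ a b : ℕ, QMap (Fin a) (Fin b) → QMap (Fin a) (Fin b) → EReal,
      (∀ (a b a' b' r : ℕ) (M N : QMap (Fin a) (Fin b))
          (E : QMap (Fin a') (Fin a × Fin r)) (F : QMap (Fin b × Fin r) (Fin b')),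
        IsCPTP M → IsCPTP N → IsCPTP E → IsCPTP F →
        D a' b' (superApply E F M) (superApply E F N) ≤ D a b M N) →
      (∀ a b M N, R a b M → R a b N → D a b M N = C a b M N) →
      ∀ (a b : ℕ) (M N : QMap (Fin a) (Fin b)), IsCPTP M → IsCPTP N →
        Cmin R C a b M N ≤ D a b M N ∧ D a b M N ≤ Cmax R C a b M N) := by
  refine ⟨?_, ?_, ?_⟩
  · -- (a) data processing
    intro a b a' b' r M N E F hM hN hE hF
    constructor
    · unfold Cmin
      apply sSup_le_sSup
      rintro v ⟨a2, b2, r2, E1, F1, hE1, hF1, hRM, hRN, rfl⟩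
      refine ⟨a2, b2, r * r2, Ecomp E E1, Fcomp F F1, isCPTP_Ecomp hE hE1,
        isCPTP_Fcomp hF hF1, ?_, ?_, ?_⟩
      · rw [superApply_comp]; exact hRM
      · rw [superApply_comp]; exact hRN
      · rw [superApply_comp, superApply_comp]
    · unfold Cmax
      apply sInf_le_sInf
      rintro v ⟨a2, b2, r2, Ech, Fch, E0, F0, hRE, hRF, hE0, hF0, hME, hNE, rfl⟩
      refine ⟨a2, b2, r2 * r, Ech, Fch, Ecomp E0 E, Fcomp F0 F, hRE, hRF,
        isCPTP_Ecomp hE0 hE, isCPTP_Fcomp hF0 hF, ?_, ?_, rfl⟩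
      · rw [superApply_comp, hME]
      · rw [superApply_comp, hNE]
  · -- (b) reduction to C on R
    intro a b M N hRM hRN
    constructor
    · refine le_antisymm ?_ ?_
      · apply sSup_le
        rintro v ⟨a', b', r, E, F, hE, hF, h1, h2, rfl⟩
        exact hCmono a b a' b' r M N E F hRM hRN hE hF h1 h2
      · apply le_sSup
        refine ⟨a, b, 1, idE a, idF b, isCPTP_idE a, isCPTP_idF b, ?_, ?_, ?_⟩
        · rw [superApply_idEF]; exact hRM
        · rw [superApply_idEF]; exact hRN
        · rw [superApply_idEF, superApply_idEF]
    · refine le_antisymm ?_ ?_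
      · apply sInf_le
        exact ⟨a, b, 1, M, N, idE a, idF b, hRM, hRN, isCPTP_idE a, isCPTP_idF b,
          superApply_idEF M, superApply_idEF N, rfl⟩
      · apply le_sInf
        rintro v ⟨a', b', r, Ech, Fch, E0, F0, hRE, hRF, hE0, hF0, hME, hNE, rfl⟩
        have h1 : R a b (superApply E0 F0 Ech) := by rw [hME]; exact hRM
        have h2 : R a b (superApply E0 F0 Fch) := by rw [hNE]; exact hRN
        have := hCmono a' b' a b r Ech Fch E0 F0 hRE hRF hE0 hF0 h1 h2
        rw [hME, hNE] at this
        exact this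
  · -- (c) optimality
    intro D hDmono hDred a b M N hM hN
    constructor
    · apply sSup_le
      rintro v ⟨a', b', r, E, F, hE, hF, h1, h2, rfl⟩
      rw [← hDred a' b' _ _ h1 h2]
      exact hDmono a b a' b' r M N E F hM hN hE hF
    · apply le_sInf
      rintro v ⟨a', b', r, Ech, Fch, E0, F0, hRE, hRF, hE0, hF0, hME, hNE, rfl⟩
      rw [← hDred a' b' Ech Fch hRE hRF]
      have := hDmono a' b' a b r Ech Fch E0 F0 (hR _ _ _ hRE) (hR _ _ _ hRF) hE0 hF0
      rw [hME, hNE] at this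
      exact this
end
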